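/- arXiv:1805.05485 — 7 statements merged into one kernel-verified Lean document; each statement's English description precedes it below -/
import Mathlib

section
/- Let G=(V,D,B) be a mixed graph on V={1,...,p} whose connected components (formed using edges of both types) have vertex sets V_1,...,V_k, so that V_1,...,V_k partition V and no edge of D or B joins two different parts. Then every Σ ∈ PD(G) satisfies Σ_{ij}=0 whenever i and j lie in different parts, and for every positive semidefinite p×p matrix S, the supremum in the extended reals satisfies sup_{Σ ∈ PD(G)} ℓ(Σ|S) = Σ_{j=1}^k sup_{Σ_j ∈ PD(G_j)} ℓ(Σ_j | S_{V_j,V_j}), where G_j is the subgraph of G induced on V_j and S_{V_j,V_j} is the corresponding principal submatrix of S. -/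
open Matrix MeasureTheory Filter

noncomputable section

/-- Matrices `Λ` supported on the directed edge set `D` with `I - Λ` invertible. -/
def RDreg {ι : Type*} [Fintype ι] [DecidableEq ι] (D : Set (ι × ι)) :
    Set (Matrix ι ι ℝ) :=
  {Λ | (∀ i j, (i, j) ∉ D → Λ i j = 0) ∧ IsUnit (1 - Λ)}

/-- Positive definite matrices with off-diagonal support over the bidirected edges `B`. -/
def PDB {ι : Type*} [Fintype ι] [DecidableEq ι] (B : SimpleGraph ι) :
    Set (Matrix ι ι ℝ) :=
  {Ω | Ω.PosDef ∧ ∀ i j, i ≠ j → ¬ B.Adj i j → Ω i j = 0}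

/-- The covariance matrices of the linear structural equation model of the mixed graph
`G = (V, D, B)`:  `PD(G) = {(I-Λ)⁻ᵀ Ω (I-Λ)⁻¹}`. -/
def PDG {ι : Type*} [Fintype ι] [DecidableEq ι] (D : Set (ι × ι)) (B : SimpleGraph ι) :
    Set (Matrix ι ι ℝ) :=
  {S | ∃ Λ ∈ RDreg D, ∃ Ω ∈ PDB B, S = ((1 - Λ)⁻¹)ᵀ * Ω * (1 - Λ)⁻¹}

/-- Gaussian log-likelihood `ℓ(Σ | S) = - log det Σ - trace (Σ⁻¹ S)`. -/
def loglik {ι : Type*} [Fintype ι] [DecidableEq ι] (Sig S : Matrix ι ι ℝ) : ℝ :=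
  -Real.log Sig.det - (Sig⁻¹ * S).trace

/-- A set of nodes together with all parents of its elements. -/
def Pa {ι : Type*} (D : Set (ι × ι)) (C : Set ι) : Set ι :=
  C ∪ {k | ∃ i ∈ C, (k, i) ∈ D}

noncomputable local instance {p : ℕ} (s : Set (Fin p)) : Fintype s := Fintype.ofFinite s

namespace LoglikAux

open Finset

open scoped Classical

/-! ### General facts -/

lemma star_pi {ι : Type*} (x : ι → ℝ) : star x = x := funext fun _ => star_trivial _

lemma ereal_coe_sum {α : Type*} (s : Finset α) (f : α → ℝ) :
    ((∑ i ∈ s, f i : ℝ) : EReal) = ∑ i ∈ s, (f i : EReal) :=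
  map_sum (⟨⟨Real.toEReal, EReal.coe_zero⟩, EReal.coe_add⟩ : ℝ →+ EReal) f s

/-- supremum/sum exchange inequality in `EReal`. -/
lemma sum_iSup_le {k : ℕ} (T : Fin k → Type*) [∀ j, Nonempty (T j)]
    (g : ∀ j, T j → EReal) :
    ∑ j, (⨆ t, g j t) ≤ ⨆ t : ∀ j, T j, ∑ j, g j (t j) := by
  suffices h : ∀ s : Finset (Fin k),
      ∑ j ∈ s, (⨆ t, g j t) ≤ ⨆ t : ∀ j, T j, ∑ j ∈ s, g j (t j) from h univ
  intro s
  induction s using Finset.induction with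
  | empty => simp
  | @insert a s ha ih =>
    simp only [Finset.sum_insert ha]
    refine le_trans (add_le_add_right ih _) ?_
    apply EReal.add_le_of_forall_lt
    intro x hx y hy
    rw [lt_iSup_iff] at hx hy
    obtain ⟨ta, hta⟩ := hx
    obtain ⟨t, ht⟩ := hy
    have key : g a ta + ∑ j ∈ s, g j (t j)
        = g a (Function.update t a ta a) + ∑ j ∈ s, g j (Function.update t a ta j) := by
      rw [Function.update_self]
      congr 1
      refine Finset.sum_congr rfl fun j hj => ?_
      rw [Function.update_of_ne (ne_of_mem_of_not_mem hj ha)]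
    calc x + y ≤ g a ta + ∑ j ∈ s, g j (t j) := add_le_add hta.le ht.le
      _ = _ := key
      _ ≤ ⨆ t : ∀ j, T j, (g a (t a) + ∑ j ∈ s, g j (t j)) :=
          le_iSup (fun t : ∀ j, T j => g a (t a) + ∑ j ∈ s, g j (t j))
            (Function.update t a ta)

/-! ### Block matrices with respect to a partition -/

variable {p k : ℕ}

/-- the principal submatrix over the `j`-th block. -/
def blk (V : Fin k → Set (Fin p)) (j : Fin k) (M : Matrix (Fin p) (Fin p) ℝ) :
    Matrix (V j) (V j) ℝ := M.submatrix Subtype.val Subtype.val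

/-- block-diagonality with respect to the classifying map `c`. -/
def Blk (c : Fin p → Fin k) (M : Matrix (Fin p) (Fin p) ℝ) : Prop :=
  ∀ a b, c a ≠ c b → M a b = 0

variable {V : Fin k → Set (Fin p)} {c : Fin p → Fin k}

lemma mem_iff (hc : ∀ i, i ∈ V (c i)) (hu : ∀ i j, i ∈ V j → c i = j)
    {a : Fin p} {j : Fin k} : a ∈ V j ↔ c a = j :=
  ⟨hu a j, fun h => h ▸ hc a⟩

lemma sum_restrict {j : Fin k} (f : Fin p → ℝ) (hf : ∀ x, x ∉ V j → f x = 0) :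
    ∑ x : V j, f ↑x = ∑ x, f x := by
  rw [← Finset.sum_filter_of_ne (s := Finset.univ) (p := fun x => x ∈ V j)
    (fun x _ hx => by by_contra h; exact hx (hf x h))]
  exact (Finset.sum_subtype _ (fun x => by simp) f).symm

lemma sum_fiber (hc : ∀ i, i ∈ V (c i)) (hu : ∀ i j, i ∈ V j → c i = j)
    (f : Fin p → ℝ) : ∑ x, f x = ∑ j, ∑ a : V j, f ↑a := by
  rw [← Finset.sum_fiberwise Finset.univ c f]
  refine Finset.sum_congr rfl fun j _ => ?_
  exact Finset.sum_subtype _ (fun x => by simp [mem_iff hc hu]) f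

lemma blk_apply (M : Matrix (Fin p) (Fin p) ℝ) (j : Fin k) (a b : V j) :
    blk V j M a b = M ↑a ↑b := rfl

lemma blk_one (j : Fin k) : blk V j (1 : Matrix (Fin p) (Fin p) ℝ) = 1 := by
  ext a b
  simp only [blk, Matrix.submatrix_apply, Matrix.one_apply, Subtype.ext_iff]

lemma blk_sub (j : Fin k) (A B : Matrix (Fin p) (Fin p) ℝ) :
    blk V j (A - B) = blk V j A - blk V j B := rfl

lemma blk_transpose (j : Fin k) (A : Matrix (Fin p) (Fin p) ℝ) :
    blk V j Aᵀ = (blk V j A)ᵀ := rfl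

lemma Blk.transpose {A : Matrix (Fin p) (Fin p) ℝ} (hA : Blk c A) : Blk c Aᵀ :=
  fun a b h => hA b a h.symm

lemma Blk.one : Blk c (1 : Matrix (Fin p) (Fin p) ℝ) :=
  fun _ _ h => Matrix.one_apply_ne (fun e => h (by rw [e]))

lemma Blk.sub {A B : Matrix (Fin p) (Fin p) ℝ} (hA : Blk c A) (hB : Blk c B) :
    Blk c (A - B) := fun a b h => by
  simp only [Matrix.sub_apply, hA a b h, hB a b h, sub_zero]

lemma Blk.mul {A B : Matrix (Fin p) (Fin p) ℝ} (hA : Blk c A) (hB : Blk c B) :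
    Blk c (A * B) := by
  intro a b h
  rw [Matrix.mul_apply]
  apply Finset.sum_eq_zero
  intro x _
  by_cases hx : c a = c x
  · rw [hB x b (fun e => h (hx.trans e)), mul_zero]
  · rw [hA a x hx, zero_mul]

lemma blk_mul (hc : ∀ i, i ∈ V (c i)) (hu : ∀ i j, i ∈ V j → c i = j)
    {A : Matrix (Fin p) (Fin p) ℝ} (hA : Blk c A) (B : Matrix (Fin p) (Fin p) ℝ)
    (j : Fin k) : blk V j (A * B) = blk V j A * blk V j B := by
  ext a b
  rw [blk_apply, Matrix.mul_apply, Matrix.mul_apply]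
  refine (sum_restrict (fun x => A ↑a x * B x ↑b) fun x hx => ?_).symm
  have hca : c (a : Fin p) = j := hu _ j a.2
  have hcx : c x ≠ j := fun e => hx ((mem_iff hc hu).mpr e)
  show A ↑a x * B x ↑b = 0
  rw [hA ↑a x (by rw [hca]; exact fun e => hcx e.symm), zero_mul]

lemma det_blk (hc : ∀ i, i ∈ V (c i)) (hu : ∀ i j, i ∈ V j → c i = j)
    {A : Matrix (Fin p) (Fin p) ℝ} (hA : Blk c A) :
    A.det = ∏ j, (blk V j A).det := by
  have htri : A.BlockTriangular c := fun i j h => hA i j h.ne'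
  rw [htri.det_fintype]
  refine Finset.prod_congr rfl fun j _ => ?_
  have he : ∀ x : Fin p, c x = j ↔ x ∈ V j := fun x => (mem_iff hc hu).symm
  have : A.toSquareBlock c j
      = (blk V j A).submatrix (Equiv.subtypeEquivRight he) (Equiv.subtypeEquivRight he) := by
    ext a b; rfl
  rw [this, Matrix.det_submatrix_equiv_self]

lemma Blk.inv {A : Matrix (Fin p) (Fin p) ℝ} (hA : Blk c A) (h : IsUnit A) :
    Blk c A⁻¹ := by
  haveI := A.invertibleOfIsUnitDet ((Matrix.isUnit_iff_isUnit_det A).1 h)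
  haveI := Aᵀ.invertibleOfIsUnitDet
    (by rw [Matrix.det_transpose]; exact (Matrix.isUnit_iff_isUnit_det A).1 h)
  have h1 : A.BlockTriangular c := fun i j hlt => hA i j hlt.ne'
  have h2 : Aᵀ.BlockTriangular c := fun i j hlt => hA j i hlt.ne
  have k1 := Matrix.blockTriangular_inv_of_blockTriangular h1
  have k2 := Matrix.blockTriangular_inv_of_blockTriangular h2
  intro a b hab
  rcases hab.lt_or_gt with hl | hl
  · have := k2 hl
    rwa [← Matrix.transpose_nonsing_inv, Matrix.transpose_apply] at this
  · exact k1 hl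

lemma blk_inv (hc : ∀ i, i ∈ V (c i)) (hu : ∀ i j, i ∈ V j → c i = j)
    {A : Matrix (Fin p) (Fin p) ℝ} (hA : Blk c A) (h : IsUnit A) (j : Fin k) :
    blk V j A⁻¹ = (blk V j A)⁻¹ := by
  have h1 : blk V j A * blk V j A⁻¹ = 1 := by
    rw [← blk_mul hc hu hA, Matrix.mul_nonsing_inv _ ((Matrix.isUnit_iff_isUnit_det A).1 h),
      blk_one]
  exact (Matrix.inv_eq_right_inv h1).symm

lemma blk_isUnit (hc : ∀ i, i ∈ V (c i)) (hu : ∀ i j, i ∈ V j → c i = j)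
    {A : Matrix (Fin p) (Fin p) ℝ} (hA : Blk c A) (h : IsUnit A) (j : Fin k) :
    IsUnit (blk V j A) := by
  have hd : A.det ≠ 0 := ((Matrix.isUnit_iff_isUnit_det A).1 h).ne_zero
  rw [det_blk hc hu hA] at hd
  have := Finset.prod_ne_zero_iff.1 hd j (Finset.mem_univ j)
  exact (Matrix.isUnit_iff_isUnit_det _).2 (Ne.isUnit this)

lemma trace_blk (hc : ∀ i, i ∈ V (c i)) (hu : ∀ i j, i ∈ V j → c i = j)
    {A : Matrix (Fin p) (Fin p) ℝ} (hA : Blk c A) (S : Matrix (Fin p) (Fin p) ℝ) :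
    (A * S).trace = ∑ j, (blk V j A * blk V j S).trace := by
  have h1 : (A * S).trace = ∑ i, (A * S) i i := by
    simp [Matrix.trace, Matrix.diag]
  rw [h1, sum_fiber hc hu (fun i => (A * S) i i)]
  refine Finset.sum_congr rfl fun j _ => ?_
  rw [← blk_mul hc hu hA S j]
  simp [Matrix.trace, Matrix.diag, blk]

lemma quadform_blk (hc : ∀ i, i ∈ V (c i)) (hu : ∀ i j, i ∈ V j → c i = j)
    {A : Matrix (Fin p) (Fin p) ℝ} (hA : Blk c A) (x : Fin p → ℝ) :
    x ⬝ᵥ (A *ᵥ x) = ∑ j, (fun a : V j => x ↑a) ⬝ᵥ (blk V j A *ᵥ fun a : V j => x ↑a) := by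
  rw [dotProduct, sum_fiber hc hu (fun i => x i * (A *ᵥ x) i)]
  refine Finset.sum_congr rfl fun j _ => Finset.sum_congr rfl fun a _ => ?_
  congr 1
  show (A *ᵥ x) ↑a = _
  rw [Matrix.mulVec, dotProduct]
  refine (sum_restrict (fun l => A ↑a l * x l) fun l hl => ?_).symm
  have hca : c (a : Fin p) = j := hu _ j a.2
  have hcl : c l ≠ j := fun e => hl ((mem_iff hc hu).mpr e)
  show A ↑a l * x l = 0
  rw [hA ↑a l (by rw [hca]; exact fun e => hcl e.symm), zero_mul]

lemma posDef_blk {A : Matrix (Fin p) (Fin p) ℝ} (hA : A.PosDef) (j : Fin k) :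
    (blk V j A).PosDef := by
  refine Matrix.PosDef.of_dotProduct_mulVec_pos (hA.1.submatrix _) fun ⦃x⦄ hx => ?_
  set y : Fin p → ℝ := fun i => if h : i ∈ V j then x ⟨i, h⟩ else 0 with hy
  have hyv : ∀ a : V j, y ↑a = x a := fun a => by
    simp only [hy]
    rw [dif_pos a.2]
  have hyz : ∀ i, i ∉ V j → y i = 0 := fun i hi => by simp only [hy]; rw [dif_neg hi]
  have hyne : y ≠ 0 := by
    obtain ⟨a, ha⟩ := Function.ne_iff.1 hx
    exact Function.ne_iff.2 ⟨↑a, by rw [hyv a]; simpa using ha⟩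
  have key : star y ⬝ᵥ (A *ᵥ y) = star x ⬝ᵥ (blk V j A *ᵥ x) := by
    rw [star_pi, star_pi, dotProduct, dotProduct]
    rw [← sum_restrict (V := V) (j := j) (fun i => y i * (A *ᵥ y) i)
      (fun i hi => by show y i * (A *ᵥ y) i = 0; rw [hyz i hi, zero_mul])]
    refine Finset.sum_congr rfl fun a _ => ?_
    rw [hyv a]
    congr 1
    show (A *ᵥ y) ↑a = _
    rw [Matrix.mulVec, dotProduct]
    rw [← sum_restrict (V := V) (j := j) (fun l => A ↑a l * y l)
      (fun l hl => by show A ↑a l * y l = 0; rw [hyz l hl, mul_zero])]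
    refine Finset.sum_congr rfl fun b _ => ?_
    rw [hyv b]
    rfl
  rw [← key]
  exact hA.dotProduct_mulVec_pos hyne

lemma posDef_of_blocks (hc : ∀ i, i ∈ V (c i)) (hu : ∀ i j, i ∈ V j → c i = j)
    {A : Matrix (Fin p) (Fin p) ℝ} (hA : Blk c A) (hherm : A.IsHermitian)
    (h : ∀ j, (blk V j A).PosDef) : A.PosDef := by
  refine Matrix.PosDef.of_dotProduct_mulVec_pos hherm fun ⦃x⦄ hx => ?_
  rw [star_pi, quadform_blk hc hu hA x]
  obtain ⟨a, ha⟩ := Function.ne_iff.1 hx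
  refine Finset.sum_pos' (fun j _ => ?_) ⟨c a, Finset.mem_univ _, ?_⟩
  · have := (h j).posSemidef.dotProduct_mulVec_nonneg (fun b : V j => x ↑b)
    rwa [star_pi] at this
  · have hne : (fun b : V (c a) => x ↑b) ≠ 0 :=
      Function.ne_iff.2 ⟨⟨a, hc a⟩, by simpa using ha⟩
    have := (h (c a)).dotProduct_mulVec_pos hne
    rwa [star_pi] at this

/-! ### Assembling a block-diagonal matrix from blocks -/

/-- the embedding of a block matrix into the big space. -/
def emb (V : Fin k → Set (Fin p)) (j : Fin k) (T : Matrix (V j) (V j) ℝ) :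
    Matrix (Fin p) (Fin p) ℝ :=
  Matrix.of fun a b => if h : a ∈ V j ∧ b ∈ V j then T ⟨a, h.1⟩ ⟨b, h.2⟩ else 0

/-- assembling blocks into a block-diagonal matrix. -/
def asm (V : Fin k → Set (Fin p)) (T : ∀ j, Matrix (V j) (V j) ℝ) :
    Matrix (Fin p) (Fin p) ℝ := ∑ j, emb V j (T j)

lemma asm_apply (T : ∀ j, Matrix (V j) (V j) ℝ) (a b : Fin p) :
    asm V T a b = ∑ j, emb V j (T j) a b := by
  simp [asm, Matrix.sum_apply]

lemma asm_Blk (hc : ∀ i, i ∈ V (c i)) (hu : ∀ i j, i ∈ V j → c i = j)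
    (T : ∀ j, Matrix (V j) (V j) ℝ) : Blk c (asm V T) := by
  intro a b hab
  rw [asm_apply]
  apply Finset.sum_eq_zero
  intro j _
  rw [emb]
  simp only [Matrix.of_apply]
  rw [dif_neg]
  rintro ⟨h1, h2⟩
  exact hab ((hu a j h1).trans (hu b j h2).symm)

lemma blk_asm (hc : ∀ i, i ∈ V (c i)) (hu : ∀ i j, i ∈ V j → c i = j)
    (T : ∀ j, Matrix (V j) (V j) ℝ) (j : Fin k) : blk V j (asm V T) = T j := by
  ext a b
  rw [blk_apply, asm_apply]
  rw [Finset.sum_eq_single j]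
  · rw [emb]
    simp only [Matrix.of_apply]
    rw [dif_pos ⟨a.2, b.2⟩]
  · intro j' _ hj'
    rw [emb]
    simp only [Matrix.of_apply]
    rw [dif_neg]
    rintro ⟨h1, _⟩
    exact hj' ((hu _ j' h1).symm.trans (hu _ j a.2))
  · intro h; exact absurd (Finset.mem_univ j) h

lemma asm_isHermitian (hc : ∀ i, i ∈ V (c i)) (hu : ∀ i j, i ∈ V j → c i = j)
    (T : ∀ j, Matrix (V j) (V j) ℝ) (h : ∀ j, (T j).IsHermitian) :
    (asm V T).IsHermitian := by
  rw [Matrix.IsHermitian]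
  ext a b
  rw [Matrix.conjTranspose_apply, star_trivial, asm_apply, asm_apply]
  refine Finset.sum_congr rfl fun j _ => ?_
  rw [emb]
  simp only [Matrix.of_apply]
  by_cases hab : a ∈ V j ∧ b ∈ V j
  · rw [dif_pos ⟨hab.2, hab.1⟩, dif_pos hab]
    have := (h j).apply ⟨b, hab.2⟩ ⟨a, hab.1⟩
    rw [star_trivial] at this
    exact this.symm
  · rw [dif_neg (fun hh => hab ⟨hh.2, hh.1⟩), dif_neg hab]

/-! ### PDG facts -/

lemma one_mem_PDG {ι : Type*} [Fintype ι] [DecidableEq ι] (D : Set (ι × ι))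
    (B : SimpleGraph ι) : (1 : Matrix ι ι ℝ) ∈ PDG D B := by
  refine ⟨0, ⟨fun i j _ => rfl, by simp⟩, 1,
    ⟨Matrix.PosDef.one, fun i j h _ => Matrix.one_apply_ne h⟩, by simp⟩

lemma PDG_posDef {ι : Type*} [Fintype ι] [DecidableEq ι] {D : Set (ι × ι)}
    {B : SimpleGraph ι} {Sig : Matrix ι ι ℝ} (h : Sig ∈ PDG D B) : Sig.PosDef := by
  obtain ⟨Λ, ⟨-, hunit⟩, Ω, ⟨hΩ, -⟩, rfl⟩ := h
  have hdet : IsUnit (1 - Λ).det := (Matrix.isUnit_iff_isUnit_det _).1 hunit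
  set Q := (1 - Λ)⁻¹ with hQ
  have hΩt : Ωᵀ = Ω := by
    rw [← Matrix.conjTranspose_eq_transpose_of_trivial]; exact hΩ.1
  refine Matrix.PosDef.of_dotProduct_mulVec_pos ?_ ?_
  · rw [Matrix.IsHermitian, Matrix.conjTranspose_eq_transpose_of_trivial,
      Matrix.transpose_mul, Matrix.transpose_mul, Matrix.transpose_transpose, hΩt,
      mul_assoc]
  · intro x hx
    have hy : (1 - Λ) *ᵥ (Q *ᵥ x) = x := by
      rw [Matrix.mulVec_mulVec, Matrix.mul_nonsing_inv _ hdet, Matrix.one_mulVec]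
    have hyne : Q *ᵥ x ≠ 0 := fun h0 => hx (by rw [← hy, h0, Matrix.mulVec_zero])
    have key : star x ⬝ᵥ ((Qᵀ * Ω * Q) *ᵥ x) = star (Q *ᵥ x) ⬝ᵥ (Ω *ᵥ (Q *ᵥ x)) := by
      rw [star_pi, star_pi, ← Matrix.mulVec_mulVec, ← Matrix.mulVec_mulVec,
        Matrix.dotProduct_mulVec, Matrix.vecMul_transpose]
    rw [key]
    exact hΩ.dotProduct_mulVec_pos hyne

end LoglikAux

section MainProof

open LoglikAux Finset

open scoped Classical

variable {p k : ℕ} {V : Fin k → Set (Fin p)} {c : Fin p → Fin k}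

/-- blocks of the PDG product. -/
lemma PDG_product_blocks (hc : ∀ i, i ∈ V (c i)) (hu : ∀ i j, i ∈ V j → c i = j)
    {Λ Ω : Matrix (Fin p) (Fin p) ℝ} (hΛ : Blk c Λ) (hΩ : Blk c Ω)
    (hunit : IsUnit (1 - Λ)) :
    Blk c (((1 - Λ)⁻¹)ᵀ * Ω * (1 - Λ)⁻¹) ∧
    ∀ j, blk V j (((1 - Λ)⁻¹)ᵀ * Ω * (1 - Λ)⁻¹)
      = ((1 - blk V j Λ)⁻¹)ᵀ * blk V j Ω * (1 - blk V j Λ)⁻¹ := by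
  have hQ0 : Blk c (1 - Λ) := Blk.one.sub hΛ
  have hQ : Blk c (1 - Λ)⁻¹ := hQ0.inv hunit
  refine ⟨(hQ.transpose.mul hΩ).mul hQ, fun j => ?_⟩
  rw [blk_mul hc hu (hQ.transpose.mul hΩ) _ j, blk_mul hc hu hQ.transpose _ j,
    blk_transpose, blk_inv hc hu hQ0 hunit, blk_sub, blk_one]

/-- assembled/restricted membership in `PDG`. -/
lemma loglik_decomp (hc : ∀ i, i ∈ V (c i)) (hu : ∀ i j, i ∈ V j → c i = j)
    {Sig : Matrix (Fin p) (Fin p) ℝ} (hB : Blk c Sig) (hpd : Sig.PosDef)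
    (S : Matrix (Fin p) (Fin p) ℝ) :
    loglik Sig S = ∑ j, loglik (blk V j Sig) (blk V j S) := by
  have hunit : IsUnit Sig := hpd.isUnit
  have hlog : Real.log Sig.det = ∑ j, Real.log (blk V j Sig).det := by
    rw [det_blk hc hu hB, Real.log_prod]
    intro j _
    exact (posDef_blk hpd j).det_pos.ne'
  have htr : (Sig⁻¹ * S).trace = ∑ j, ((blk V j Sig)⁻¹ * blk V j S).trace := by
    rw [trace_blk hc hu (hB.inv hunit) S]
    exact Finset.sum_congr rfl fun j _ => by rw [blk_inv hc hu hB hunit]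
  have hj : ∀ j : Fin k, loglik (blk V j Sig) (blk V j S)
      = -Real.log (blk V j Sig).det - ((blk V j Sig)⁻¹ * blk V j S).trace := fun j => rfl
  simp only [loglik, hlog, htr, hj, Finset.sum_sub_distrib, Finset.sum_neg_distrib]

end MainProof

open LoglikAux Finset in
/-- If the connected components (with respect to edges of both types) of the mixed graph
`G = (V, D, B)` have vertex sets `V_1, ..., V_k`, then every `Σ ∈ PD(G)` vanishes in the
entries joining two different components, and the supremum of the log-likelihood over
`PD(G)` is the sum over `j` of the suprema of the log-likelihoods of the induced
subgraphs `G_j` evaluated at the principal submatrices `S_{V_j, V_j}`. -/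
theorem loglik_sup_decomposition (p k : ℕ) (D : Set (Fin p × Fin p))
    (hD : ∀ i, (i, i) ∉ D) (B : SimpleGraph (Fin p))
    (V : Fin k → Set (Fin p))
    (hpart : ∀ i : Fin p, ∃! j, i ∈ V j)
    (hne : ∀ j, (V j).Nonempty)
    (hsep : ∀ j j', j ≠ j' → ∀ a ∈ V j, ∀ b ∈ V j', (a, b) ∉ D ∧ ¬ B.Adj a b)
    (hconn : ∀ j, ∀ a ∈ V j, ∀ b ∈ V j,
      Relation.ReflTransGen (fun x y => (x, y) ∈ D ∨ (y, x) ∈ D ∨ B.Adj x y) a b)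
    (S : Matrix (Fin p) (Fin p) ℝ) (hS : S.PosSemidef) :
    (∀ Sig ∈ PDG D B, ∀ j j', j ≠ j' → ∀ a ∈ V j, ∀ b ∈ V j', Sig a b = 0) ∧
    (⨆ Sig ∈ PDG D B, (loglik Sig S : EReal)) =
      ∑ j : Fin k,
        ⨆ Sigj ∈ PDG {ab : (V j) × (V j) | ((ab.1 : Fin p), (ab.2 : Fin p)) ∈ D}
            (B.induce (V j)),
          (loglik Sigj (S.submatrix (Subtype.val) (Subtype.val)) : EReal) := by
  classical
  -- the classifying map
  set c : Fin p → Fin k := fun i => (hpart i).choose with hc_def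
  have hc : ∀ i, i ∈ V (c i) := fun i => (hpart i).choose_spec.1
  have hu : ∀ i j, i ∈ V j → c i = j := fun i j h => ((hpart i).choose_spec.2 j h).symm
  -- cross-block edges do not exist
  have hD' : ∀ a b : Fin p, c a ≠ c b → (a, b) ∉ D :=
    fun a b h => (hsep (c a) (c b) h a (hc a) b (hc b)).1
  have hB' : ∀ a b : Fin p, c a ≠ c b → ¬ B.Adj a b :=
    fun a b h => (hsep (c a) (c b) h a (hc a) b (hc b)).2
  -- the induced edge sets
  set Dj : ∀ j : Fin k, Set ((V j) × (V j)) :=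
    fun j => {ab : (V j) × (V j) | ((ab.1 : Fin p), (ab.2 : Fin p)) ∈ D} with hDj_def
  -- decomposition of membership in PDG, forward direction
  have forward : ∀ Sig ∈ PDG D B, Blk c Sig ∧
      ∀ j, blk V j Sig ∈ PDG (Dj j) (B.induce (V j)) := by
    rintro Sig ⟨Λ, ⟨hΛsupp, hΛunit⟩, Ω, ⟨hΩpd, hΩsupp⟩, rfl⟩
    have hΛ : Blk c Λ := fun a b h => hΛsupp a b (hD' a b h)
    have hΩ : Blk c Ω := fun a b h =>
      hΩsupp a b (fun e => h (by rw [e])) (hB' a b h)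
    obtain ⟨hblk, hblocks⟩ := PDG_product_blocks hc hu hΛ hΩ hΛunit
    refine ⟨hblk, fun j => ?_⟩
    refine ⟨blk V j Λ, ⟨fun a b hab => hΛsupp ↑a ↑b hab, ?_⟩,
      blk V j Ω, ⟨posDef_blk hΩpd j, ?_⟩, hblocks j⟩
    · rw [show (1 : Matrix (V j) (V j) ℝ) - blk V j Λ = blk V j (1 - Λ) by
        rw [blk_sub, blk_one]]
      exact blk_isUnit hc hu (Blk.one.sub hΛ) hΛunit j
    · intro a b hab hnadj
      refine hΩsupp ↑a ↑b (fun e => hab (Subtype.ext e)) ?_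
      intro hadj
      exact hnadj hadj
  -- backward: assemble blocks
  have backward : ∀ T : ∀ j, Matrix (V j) (V j) ℝ,
      (∀ j, T j ∈ PDG (Dj j) (B.induce (V j))) →
      asm V T ∈ PDG D B ∧ ∀ j, blk V j (asm V T) = T j := by
    intro T hT
    choose Λj hΛj Ωj hΩj hTj using hT
    set Λ : Matrix (Fin p) (Fin p) ℝ := asm V Λj with hΛ_def
    set Ω : Matrix (Fin p) (Fin p) ℝ := asm V Ωj with hΩ_def
    have hΛblk : Blk c Λ := asm_Blk hc hu Λj
    have hΩblk : Blk c Ω := asm_Blk hc hu Ωj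
    have hblkΛ : ∀ j, blk V j Λ = Λj j := blk_asm hc hu Λj
    have hblkΩ : ∀ j, blk V j Ω = Ωj j := blk_asm hc hu Ωj
    have hΛunit : IsUnit (1 - Λ) := by
      rw [Matrix.isUnit_iff_isUnit_det, isUnit_iff_ne_zero,
        det_blk hc hu (Blk.one.sub hΛblk)]
      rw [Finset.prod_ne_zero_iff]
      intro j _
      have : blk V j (1 - Λ) = 1 - Λj j := by rw [blk_sub, blk_one, hblkΛ]
      rw [this]
      exact ((Matrix.isUnit_iff_isUnit_det _).1 (hΛj j).2).ne_zero
    have hΛmem : Λ ∈ RDreg D := by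
      refine ⟨fun a b hab => ?_, hΛunit⟩
      by_cases h : c a = c b
      · have hb : b ∈ V (c a) := h ▸ hc b
        have : Λ a b = blk V (c a) Λ ⟨a, hc a⟩ ⟨b, hb⟩ := rfl
        rw [this, hblkΛ]
        exact (hΛj (c a)).1 ⟨a, hc a⟩ ⟨b, hb⟩ hab
      · exact hΛblk a b h
    have hΩmem : Ω ∈ PDB B := by
      constructor
      · refine posDef_of_blocks hc hu hΩblk
          (asm_isHermitian hc hu Ωj (fun j => (hΩj j).1.1)) (fun j => ?_)
        rw [hblkΩ]
        exact (hΩj j).1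
      · intro a b hab hnadj
        by_cases h : c a = c b
        · have hb : b ∈ V (c a) := h ▸ hc b
          have : Ω a b = blk V (c a) Ω ⟨a, hc a⟩ ⟨b, hb⟩ := rfl
          rw [this, hblkΩ]
          refine (hΩj (c a)).2 ⟨a, hc a⟩ ⟨b, hb⟩ (fun e => hab (congrArg Subtype.val e)) ?_
          intro hadj
          exact hnadj hadj
        · exact hΩblk a b h
    obtain ⟨hblk, hblocks⟩ := PDG_product_blocks hc hu hΛblk hΩblk hΛunit
    have hasm_eq : asm V T = ((1 - Λ)⁻¹)ᵀ * Ω * (1 - Λ)⁻¹ := by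
      -- both sides are block matrices with the same blocks
      ext a b
      by_cases h : c a = c b
      · have hb : b ∈ V (c a) := h ▸ hc b
        have e1 : asm V T a b = blk V (c a) (asm V T) ⟨a, hc a⟩ ⟨b, hb⟩ := rfl
        have e2 : (((1 - Λ)⁻¹)ᵀ * Ω * (1 - Λ)⁻¹ : Matrix (Fin p) (Fin p) ℝ) a b
            = blk V (c a) (((1 - Λ)⁻¹)ᵀ * Ω * (1 - Λ)⁻¹) ⟨a, hc a⟩ ⟨b, hb⟩ := rfl
        rw [e1, e2, blk_asm hc hu T, hblocks, hblkΛ, hblkΩ, ← hTj]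
      · rw [asm_Blk hc hu T a b h, hblk a b h]
    refine ⟨?_, blk_asm hc hu T⟩
    rw [hasm_eq]
    exact ⟨Λ, hΛmem, Ω, hΩmem, rfl⟩
  constructor
  · intro Sig hSig j j' hjj' a ha b hb
    exact (forward Sig hSig).1 a b (by rw [hu a j ha, hu b j' hb]; exact hjj')
  · -- the supremum identity
    have hSblk : ∀ j, S.submatrix (Subtype.val : (V j) → Fin p) Subtype.val = blk V j S :=
      fun j => rfl
    haveI : ∀ j, Nonempty ↥(PDG (Dj j) (B.induce (V j))) :=
      fun j => ⟨⟨1, one_mem_PDG _ _⟩⟩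
    apply le_antisymm
    · refine iSup₂_le fun Sig hSig => ?_
      obtain ⟨hblk, hblocks⟩ := forward Sig hSig
      have hpd := PDG_posDef hSig
      rw [loglik_decomp hc hu hblk hpd S, ereal_coe_sum]
      refine Finset.sum_le_sum fun j _ => ?_
      rw [hSblk j]
      exact le_iSup₂ (f := fun Sigj (_ : Sigj ∈ PDG (Dj j) (B.induce (V j))) =>
        ((loglik Sigj (blk V j S) : ℝ) : EReal)) (blk V j Sig) (hblocks j)
    · have step1 : ∑ j : Fin k,
          (⨆ Sigj ∈ PDG (Dj j) (B.induce (V j)),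
            ((loglik Sigj (S.submatrix Subtype.val Subtype.val) : ℝ) : EReal))
          = ∑ j : Fin k, ⨆ t : ↥(PDG (Dj j) (B.induce (V j))),
            ((loglik (t : Matrix (V j) (V j) ℝ) (blk V j S) : ℝ) : EReal) := by
        refine Finset.sum_congr rfl fun j _ => ?_
        rw [hSblk j, iSup_subtype']
      rw [step1]
      refine le_trans (sum_iSup_le (fun j => ↥(PDG (Dj j) (B.induce (V j))))
        (fun j t => ((loglik (t : Matrix (V j) (V j) ℝ) (blk V j S) : ℝ) : EReal))) ?_
      refine iSup_le fun t => ?_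
      obtain ⟨hmem, hblocks⟩ := backward (fun j => (t j : Matrix (V j) (V j) ℝ))
        (fun j => (t j).2)
      have hpd : (asm V (fun j => (t j : Matrix (V j) (V j) ℝ))).PosDef := PDG_posDef hmem
      have hblk : Blk c (asm V (fun j => (t j : Matrix (V j) (V j) ℝ))) :=
        asm_Blk hc hu _
      have key : ∑ j, ((loglik (t j : Matrix (V j) (V j) ℝ) (blk V j S) : ℝ) : EReal)
          = ((loglik (asm V (fun j => (t j : Matrix (V j) (V j) ℝ))) S : ℝ) : EReal) := by
        rw [loglik_decomp hc hu hblk hpd S, ereal_coe_sum]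
        refine Finset.sum_congr rfl fun j _ => ?_
        rw [hblocks j]
      rw [key]
      exact le_iSup₂ (f := fun Sig (_ : Sig ∈ PDG D B) => ((loglik Sig S : ℝ) : EReal))
        _ hmem

end
end

section
/- Let G be a connected simple graph on the vertex set V={1,...,p} with edge set B, and let q ∈ ℝ^p be a vector with all coordinates nonzero. Then there exists a positive definite p×p matrix Σ with Σ_{ij}=0 for all i≠j with {i,j}∉B, such that the vector Σq has precisely one nonzero entry. -/
open Matrix MeasureTheory Filter

noncomputable section

/-- For a connected simple graph `B` on `p` vertices and a vector `q` with all
coordinates nonzero, there is a positive definite matrix `Σ ∈ PD(B)` such that `Σq` has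
precisely one nonzero entry. -/
theorem exists_pdb_matrix_single_nonzero (p : ℕ) (B : SimpleGraph (Fin p))
    (hB : B.Connected) (q : Fin p → ℝ) (hq : ∀ i, q i ≠ 0) :
    ∃ Sig ∈ PDB B, ∃! kk : Fin p, Sig.mulVec q kk ≠ 0 := by
  classical
  obtain ⟨k⟩ := hB.nonempty
  set A : Fin p → ℝ := fun i => ∑ l, if B.Adj i l then q l ^ 2 else 0 with hA
  set Sig : Matrix (Fin p) (Fin p) ℝ := fun i j =>
    if i = j then A i + (if i = k then 1 else 0)
    else if B.Adj i j then -(q i * q j) else 0 with hSig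
  -- computation of Σ q
  have hmv : ∀ i, Sig.mulVec q i = if i = k then q k else 0 := by
    intro i
    have hrw : ∀ j, Sig i j * q j =
        (if j = i then (A i + if i = k then (1:ℝ) else 0) * q i else 0)
        + (if B.Adj i j then -(q i * (q j * q j)) else 0) := by
      intro j
      by_cases hij : i = j
      · subst hij
        simp [hSig]
      · have hji : ¬ j = i := fun h => hij h.symm
        simp only [hSig, if_neg hij, if_neg hji, zero_add]
        split_ifs with h
        · ring
        · simp
    have h2 : ∀ j, (if B.Adj i j then -(q i * (q j * q j)) else 0)
        = -(q i * (if B.Adj i j then q j ^ 2 else 0)) := by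
      intro j; split_ifs with h <;> ring
    calc Sig.mulVec q i = ∑ j, Sig i j * q j := by
          simp [Matrix.mulVec, dotProduct]
      _ = ∑ j, ((if j = i then (A i + if i = k then (1:ℝ) else 0) * q i else 0)
          + (if B.Adj i j then -(q i * (q j * q j)) else 0)) :=
          Finset.sum_congr rfl fun j _ => hrw j
      _ = (A i + if i = k then (1:ℝ) else 0) * q i
          + ∑ j, (if B.Adj i j then -(q i * (q j * q j)) else 0) := by
          rw [Finset.sum_add_distrib, Finset.sum_ite_eq' Finset.univ i]
          simp
      _ = (A i + if i = k then (1:ℝ) else 0) * q i - q i * A i := by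
          congr 1
          rw [Finset.sum_congr rfl fun j _ => h2 j]
          rw [Finset.sum_neg_distrib, ← Finset.mul_sum]
      _ = if i = k then q k else 0 := by
          split_ifs with h
          · subst h; ring
          · ring
  -- quadratic form identity
  have hform : ∀ x : Fin p → ℝ, 2 * (x ⬝ᵥ Sig.mulVec x) =
      2 * x k ^ 2 + ∑ i, ∑ j, (if B.Adj i j then (q j * x i - q i * x j) ^ 2 else 0) := by
    intro x
    have hdp : x ⬝ᵥ Sig.mulVec x = ∑ i, ∑ j, x i * (Sig i j * x j) := by
      simp [dotProduct, Matrix.mulVec, Finset.mul_sum]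
    have hrw : ∀ i j, x i * (Sig i j * x j) =
        (if j = i then (A i + if i = k then (1:ℝ) else 0) * (x i * x i) else 0)
        + (if B.Adj i j then -(q i * q j * (x i * x j)) else 0) := by
      intro i j
      by_cases hij : i = j
      · subst hij
        simp [hSig]
        ring
      · have hji : ¬ j = i := fun h => hij h.symm
        simp only [hSig, if_neg hij, if_neg hji, zero_add]
        split_ifs with h
        · ring
        · simp
    set S1 : ℝ := ∑ i, ∑ j, (if B.Adj i j then q j ^ 2 * x i ^ 2 else 0) with hS1
    set S2 : ℝ := ∑ i, ∑ j, (if B.Adj i j then q i * q j * (x i * x j) else 0) with hS2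
    have hF : x ⬝ᵥ Sig.mulVec x = S1 + x k ^ 2 - S2 := by
      rw [hdp, Finset.sum_congr rfl fun i _ => Finset.sum_congr rfl fun j _ => hrw i j]
      have : ∀ i : Fin p, ∑ j, ((if j = i then (A i + if i = k then (1:ℝ) else 0) * (x i * x i) else 0)
          + (if B.Adj i j then -(q i * q j * (x i * x j)) else 0))
          = ((A i + if i = k then (1:ℝ) else 0) * (x i * x i)
            + ∑ j, (if B.Adj i j then -(q i * q j * (x i * x j)) else 0)) := by
        intro i
        rw [Finset.sum_add_distrib, Finset.sum_ite_eq' Finset.univ i]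
        simp
      rw [Finset.sum_congr rfl fun i _ => this i]
      rw [Finset.sum_add_distrib]
      have hA1 : ∑ i, (A i + if i = k then (1:ℝ) else 0) * (x i * x i)
          = S1 + x k ^ 2 := by
        have : ∀ i, (A i + if i = k then (1:ℝ) else 0) * (x i * x i)
            = (∑ j, (if B.Adj i j then q j ^ 2 * x i ^ 2 else 0))
              + (if i = k then x i * x i else 0) := by
          intro i
          rw [hA]
          rw [add_mul, Finset.sum_mul]
          congr 1
          · exact Finset.sum_congr rfl fun j _ => by split_ifs <;> ring
          · split_ifs <;> ring
        rw [Finset.sum_congr rfl fun i _ => this i, Finset.sum_add_distrib]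
        congr 1
        rw [Finset.sum_ite_eq' Finset.univ k]
        simp [sq]
      have hA2 : ∑ i, ∑ j, (if B.Adj i j then -(q i * q j * (x i * x j)) else 0) = -S2 := by
        rw [hS2, ← Finset.sum_neg_distrib]
        refine Finset.sum_congr rfl fun i _ => ?_
        rw [← Finset.sum_neg_distrib]

        exact Finset.sum_congr rfl fun j _ => by split_ifs <;> ring
      rw [hA1, hA2]; ring
    have hsq : ∑ i, ∑ j, (if B.Adj i j then (q j * x i - q i * x j) ^ 2 else 0)
        = 2 * S1 - 2 * S2 := by
      have hexp : ∀ i j : Fin p, (if B.Adj i j then (q j * x i - q i * x j) ^ 2 else 0)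
          = (if B.Adj i j then q j ^ 2 * x i ^ 2 else 0)
            + (if B.Adj i j then q i ^ 2 * x j ^ 2 else 0)
            - 2 * (if B.Adj i j then q i * q j * (x i * x j) else 0) := by
        intro i j; split_ifs <;> ring
      have hS1' : (∑ i, ∑ j, (if B.Adj i j then q i ^ 2 * x j ^ 2 else 0)) = S1 := by
        rw [Finset.sum_comm, hS1]
        exact Finset.sum_congr rfl fun i _ => Finset.sum_congr rfl fun j _ => by
          rw [SimpleGraph.adj_comm]
      calc ∑ i, ∑ j, (if B.Adj i j then (q j * x i - q i * x j) ^ 2 else 0)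
          = ∑ i, ∑ j, ((if B.Adj i j then q j ^ 2 * x i ^ 2 else 0)
            + (if B.Adj i j then q i ^ 2 * x j ^ 2 else 0)
            - 2 * (if B.Adj i j then q i * q j * (x i * x j) else 0)) :=
            Finset.sum_congr rfl fun i _ => Finset.sum_congr rfl fun j _ => hexp i j
        _ = S1 + (∑ i, ∑ j, (if B.Adj i j then q i ^ 2 * x j ^ 2 else 0)) - 2 * S2 := by
            simp only [Finset.sum_sub_distrib, Finset.sum_add_distrib, ← Finset.mul_sum]
            try rw [hS1, hS2]
        _ = 2 * S1 - 2 * S2 := by rw [hS1']; ring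
    rw [hF, hsq]; ring
  -- positive definiteness
  have hherm : Sig.IsHermitian := by
    refine Matrix.IsHermitian.ext fun i j => ?_
    simp only [star_trivial]
    by_cases hij : i = j
    · subst hij; rfl
    · have hji : ¬ j = i := fun h => hij h.symm
      simp only [hSig, if_neg hij, if_neg hji]
      rw [SimpleGraph.adj_comm]
      split_ifs with h
      · ring
      · rfl
  have hpos : Sig.PosDef := by
    refine Matrix.PosDef.of_dotProduct_mulVec_pos hherm fun x hx => ?_
    simp only [star_trivial]
    by_contra hle
    push_neg at hle
    have h2F := hform x
    have hnn : (0:ℝ) ≤ ∑ i, ∑ j, (if B.Adj i j then (q j * x i - q i * x j) ^ 2 else 0) :=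
      Finset.sum_nonneg fun i _ => Finset.sum_nonneg fun j _ => by
        split_ifs; exacts [sq_nonneg _, le_refl 0]
    have hxk : x k = 0 := by nlinarith [sq_nonneg (x k)]
    have hzsum : ∑ i, ∑ j, (if B.Adj i j then (q j * x i - q i * x j) ^ 2 else 0) = 0 := by
      nlinarith [sq_nonneg (x k)]
    have hzero : ∀ i j : Fin p, B.Adj i j → q j * x i = q i * x j := by
      intro i j hadj
      have h1 := (Finset.sum_eq_zero_iff_of_nonneg (fun i _ =>
        Finset.sum_nonneg fun j _ => by
          split_ifs; exacts [sq_nonneg _, le_refl 0])).mp hzsum i (Finset.mem_univ i)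
      have h2 := (Finset.sum_eq_zero_iff_of_nonneg (fun j _ => by
        split_ifs; exacts [sq_nonneg _, le_refl 0])).mp h1 j (Finset.mem_univ j)
      rw [if_pos hadj] at h2
      have := pow_eq_zero_iff (n := 2) (by norm_num) |>.mp h2
      linarith [sub_eq_zero.mp this]
    have key : ∀ u v : Fin p, B.Walk u v → x v * q u = x u * q v := by
      intro u v w
      induction w with
      | nil => ring
      | cons hab wbc ih =>
        rename_i a b c
        have hedge := hzero a b hab
        have hcancel : x c * q a * q b = x a * q c * q b := by
          linear_combination q a * ih - q c * hedge
        exact mul_right_cancel₀ (hq b) hcancel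
    have hx0 : x = 0 := by
      funext i
      obtain ⟨w⟩ := hB.preconnected k i
      have := key k i w
      rw [hxk] at this
      have : x i * q k = 0 := by rw [this]; ring
      have := mul_eq_zero.mp this
      rcases this with h | h
      · simpa using h
      · exact absurd h (hq k)
    exact hx hx0
  refine ⟨Sig, ⟨hpos, fun i j hij hnadj => ?_⟩, k, ?_, ?_⟩
  · simp only [hSig, if_neg hij, if_neg hnadj]
  · show Sig.mulVec q k ≠ 0
    rw [hmv k, if_pos rfl]; exact hq k
  · intro i hi
    have hi' : Sig.mulVec q i ≠ 0 := hi
    by_contra hik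
    rw [hmv i, if_neg hik] at hi'
    exact hi' rfl

end
end

section
/- Let G be a connected simple graph on V={1,...,p} with edge set B, let S be a positive semidefinite p×p real matrix, and suppose there exists a vector q ∈ ℝ^p with all coordinates nonzero such that Sq = 0. Then the log-likelihood is unbounded above on PD(B): sup_{Σ ∈ PD(B)} ( −log det Σ − trace(Σ^{-1} S) ) = ∞. -/
open Matrix MeasureTheory Filter

noncomputable section

section AuxUnbounded

variable {p : ℕ}

private lemma vecMulVec_mulVec' (a b x : Fin p → ℝ) :
    vecMulVec a b *ᵥ x = (b ⬝ᵥ x) • a := by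
  ext k
  simp only [mulVec, dotProduct, vecMulVec_apply, Pi.smul_apply, smul_eq_mul, Finset.sum_mul]
  exact Finset.sum_congr rfl fun j _ => by ring

private lemma vecMulVec_mul' (a b : Fin p → ℝ) (M : Matrix (Fin p) (Fin p) ℝ) :
    vecMulVec a b * M = vecMulVec a (b ᵥ* M) := by
  ext i j
  simp only [mul_apply, vecMulVec_apply, vecMul, dotProduct, Finset.mul_sum]
  exact Finset.sum_congr rfl fun k _ => by ring

private lemma diag_dot (d x v : Fin p → ℝ) :
    x ⬝ᵥ (Matrix.diagonal d *ᵥ v) = (Matrix.diagonal d *ᵥ x) ⬝ᵥ v := by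
  simp only [dotProduct, mulVec_diagonal]
  exact Finset.sum_congr rfl fun j _ => by ring

private noncomputable def QiM (q : Fin p → ℝ) : Matrix (Fin p) (Fin p) ℝ :=
  Matrix.diagonal (fun i => (q i)⁻¹)

private noncomputable def LM (B : SimpleGraph (Fin p)) [DecidableRel B.Adj] (q : Fin p → ℝ) :
    Matrix (Fin p) (Fin p) ℝ :=
  QiM q * B.lapMatrix ℝ * QiM q

private noncomputable def SgM (B : SimpleGraph (Fin p)) [DecidableRel B.Adj] (q : Fin p → ℝ)
    (i0 : Fin p) (t : ℝ) : Matrix (Fin p) (Fin p) ℝ :=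
  LM B q + t • vecMulVec (Pi.single i0 1) (Pi.single i0 1)

variable (B : SimpleGraph (Fin p)) [DecidableRel B.Adj] (q : Fin p → ℝ) (i0 : Fin p)

private lemma LM_symm : (LM B q)ᵀ = LM B q := by
  rw [LM, transpose_mul, transpose_mul, QiM, diagonal_transpose,
    show (B.lapMatrix ℝ)ᵀ = B.lapMatrix ℝ from B.isSymm_lapMatrix (R := ℝ), Matrix.mul_assoc]

private lemma SgM_symm (t : ℝ) : (SgM B q i0 t)ᵀ = SgM B q i0 t := by
  rw [SgM, transpose_add, transpose_smul, LM_symm]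
  congr 2
  ext i j
  simp [vecMulVec_apply, transpose_apply, mul_comm]

private lemma SgM_quad (t : ℝ) (x : Fin p → ℝ) :
    x ⬝ᵥ (SgM B q i0 t *ᵥ x) =
      (QiM q *ᵥ x) ⬝ᵥ (B.lapMatrix ℝ *ᵥ (QiM q *ᵥ x)) + t * (x i0 * x i0) := by
  rw [SgM, add_mulVec, dotProduct_add]
  congr 1
  · rw [LM, ← mulVec_mulVec, ← mulVec_mulVec, QiM, diag_dot]
  · rw [smul_mulVec, vecMulVec_mulVec', dotProduct_smul, smul_eq_mul,
      single_dotProduct, one_mul, dotProduct_smul, smul_eq_mul, dotProduct_single, mul_one]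

private lemma LM_mulVec_q (hq : ∀ i, q i ≠ 0) : LM B q *ᵥ q = 0 := by
  have h1 : QiM q *ᵥ q = fun _ => 1 := by
    ext i
    simp [QiM, mulVec_diagonal, inv_mul_cancel₀ (hq i)]
  rw [LM, ← mulVec_mulVec, ← mulVec_mulVec, h1, B.lapMatrix_mulVec_const_eq_zero, mulVec_zero]

private lemma SgM_mulVec_q (hq : ∀ i, q i ≠ 0) (t : ℝ) :
    SgM B q i0 t *ᵥ q = (t * q i0) • (Pi.single i0 1 : Fin p → ℝ) := by
  rw [SgM, add_mulVec, LM_mulVec_q B q hq, zero_add, smul_mulVec, vecMulVec_mulVec',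
    single_dotProduct, one_mul, smul_smul]


private lemma SgM_posDef (hB : B.Connected) (hq : ∀ i, q i ≠ 0) (t : ℝ) (ht : 0 < t) :
    (SgM B q i0 t).PosDef := by
  rw [Matrix.posDef_iff_dotProduct_mulVec]
  constructor
  · rw [Matrix.IsHermitian, conjTranspose_eq_transpose_of_trivial, SgM_symm]
  · intro x hx
    rw [star_trivial, SgM_quad]
    set z := QiM q *ᵥ x with hz
    have h1 : 0 ≤ z ⬝ᵥ (B.lapMatrix ℝ *ᵥ z) := by
      have := (B.posSemidef_lapMatrix ℝ).dotProduct_mulVec_nonneg z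
      rwa [star_trivial] at this
    have h2 : 0 ≤ t * (x i0 * x i0) := by nlinarith [mul_self_nonneg (x i0)]
    rcases lt_or_eq_of_le (add_nonneg h1 h2) with h | h
    · exact h
    exfalso
    have hz0 : z ⬝ᵥ (B.lapMatrix ℝ *ᵥ z) = 0 := by linarith
    have hxi0 : x i0 = 0 := by
      have h3 : t * (x i0 * x i0) = 0 := by linarith
      rcases mul_eq_zero.mp h3 with h' | h'
      · exact absurd h' ht.ne'
      · nlinarith [mul_self_nonneg (x i0)]
    have hreach : ∀ i j : Fin p, B.Reachable i j → z i = z j := by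
      rw [← B.lapMatrix_toLinearMap₂'_apply'_eq_zero_iff_forall_reachable,
        Matrix.toLinearMap₂'_apply']
      exact hz0
    have hzero : ∀ i, z i = 0 := by
      intro i
      have h4 := hreach i i0 (hB.preconnected i i0)
      rw [h4, hz]
      simp [QiM, mulVec_diagonal, hxi0]
    apply hx
    ext i
    have h5 := hzero i
    rw [hz] at h5
    simp only [QiM, mulVec_diagonal] at h5
    rcases mul_eq_zero.mp h5 with h' | h'
    · exact absurd h' (inv_ne_zero (hq i))
    · exact h'

private lemma SgM_pattern (t : ℝ) (i j : Fin p) (hij : i ≠ j) (hadj : ¬ B.Adj i j) :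
    SgM B q i0 t i j = 0 := by
  have hLij : LM B q i j = 0 := by
    rw [LM, Matrix.mul_apply]
    apply Finset.sum_eq_zero
    intro k _
    rw [QiM, Matrix.diagonal_mul]
    rcases eq_or_ne k j with rfl | hk
    · have hlap : B.lapMatrix ℝ i k = 0 := by
        simp [SimpleGraph.lapMatrix, SimpleGraph.degMatrix, Matrix.diagonal_apply_ne _ hij, hadj,
          Matrix.sub_apply]
      rw [hlap]; ring
    · rw [Matrix.diagonal_apply_ne _ hk]; ring
  have hEij : vecMulVec (Pi.single i0 (1:ℝ)) (Pi.single i0 1) i j = 0 := by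
    rw [vecMulVec_apply]
    rcases eq_or_ne i i0 with rfl | hi
    · rw [Pi.single_eq_of_ne (show j ≠ i from Ne.symm hij), mul_zero]
    · rw [Pi.single_eq_of_ne hi, zero_mul]
  simp only [SgM, Matrix.add_apply, Matrix.smul_apply, hLij, hEij, smul_eq_mul, mul_zero,
    add_zero]

private lemma SgM_det (hq : ∀ i, q i ≠ 0) (t : ℝ) :
    (SgM B q i0 t).det = t * (Matrix.updateRow (LM B q) i0 (Pi.single i0 1)).det := by
  have hrow : SgM B q i0 t
      = Matrix.updateRow (LM B q) i0 (LM B q i0 + t • (Pi.single i0 1 : Fin p → ℝ)) := by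
    ext a b
    rcases eq_or_ne a i0 with rfl | ha
    · rw [Matrix.updateRow_self]
      simp [SgM, vecMulVec_apply, Pi.single_eq_same]
    · rw [Matrix.updateRow_ne ha]
      simp [SgM, vecMulVec_apply, Pi.single_eq_of_ne ha]
  have hdetL : (LM B q).det = 0 := by
    by_contra h
    have h0 := Matrix.eq_zero_of_mulVec_eq_zero h (LM_mulVec_q B q hq)
    exact hq i0 (congrFun h0 i0)
  rw [hrow, Matrix.det_updateRow_add, Matrix.det_updateRow_smul, Matrix.updateRow_eq_self,
    hdetL, zero_add]

end AuxUnbounded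

section Key
variable {p : ℕ}

private lemma key_exists (B : SimpleGraph (Fin p)) [DecidableRel B.Adj]
    (hB : B.Connected) (S : Matrix (Fin p) (Fin p) ℝ) (hS : S.PosSemidef)
    (q : Fin p → ℝ) (hq : ∀ i, q i ≠ 0) (hSq : S.mulVec q = 0) (y : ℝ) :
    ∃ Sig ∈ PDB B, y < loglik Sig S := by
  obtain ⟨i0⟩ := hB.nonempty
  set c : ℝ := (Matrix.updateRow (LM B q) i0 (Pi.single i0 1)).det with hc
  have hcpos : 0 < c := by
    have h := (SgM_posDef B q i0 hB hq 1 one_pos).det_pos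
    rwa [SgM_det B q i0 hq 1, one_mul] at h
  set N : Matrix (Fin p) (Fin p) ℝ := (SgM B q i0 1)⁻¹ * S with hN
  have hdet1 : IsUnit (SgM B q i0 1).det := by
    rw [SgM_det B q i0 hq 1, one_mul]; exact hcpos.ne'.isUnit
  have hinv_e : (SgM B q i0 1)⁻¹ *ᵥ (Pi.single i0 1 : Fin p → ℝ) = (q i0)⁻¹ • q := by
    have h1 : SgM B q i0 1 *ᵥ ((q i0)⁻¹ • q) = (Pi.single i0 1 : Fin p → ℝ) := by
      rw [mulVec_smul, SgM_mulVec_q B q i0 hq 1, one_mul, smul_smul,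
        inv_mul_cancel₀ (hq i0), one_smul]
    rw [← h1, mulVec_mulVec, Matrix.nonsing_inv_mul _ hdet1, one_mulVec]
  have hvecMul_e : (Pi.single i0 1 : Fin p → ℝ) ᵥ* (SgM B q i0 1)⁻¹ = (q i0)⁻¹ • q := by
    have h2 : (Pi.single i0 1 : Fin p → ℝ) ᵥ* (SgM B q i0 1)⁻¹
        = ((SgM B q i0 1)⁻¹)ᵀ *ᵥ (Pi.single i0 1 : Fin p → ℝ) := by
      rw [← Matrix.mulVec_transpose]
    rw [h2, Matrix.transpose_nonsing_inv, SgM_symm, hinv_e]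
  have hqS : q ᵥ* S = 0 := by
    have h3 : q ᵥ* S = Sᵀ *ᵥ q := by
      rw [← Matrix.mulVec_transpose]
    have hSsymm : Sᵀ = S := by
      have h4 := hS.1
      rwa [Matrix.IsHermitian, conjTranspose_eq_transpose_of_trivial] at h4
    rw [h3, hSsymm, hSq]
  have hEN : vecMulVec (Pi.single i0 (1:ℝ)) (Pi.single i0 1) * N = 0 := by
    rw [vecMulVec_mul', hN, ← Matrix.vecMul_vecMul, hvecMul_e, Matrix.smul_vecMul, hqS,
      smul_zero]
    ext i j
    simp [vecMulVec_apply]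
  have hmulN : ∀ t : ℝ, SgM B q i0 t * N = S := by
    intro t
    have hdecomp : SgM B q i0 t
        = SgM B q i0 1 + (t - 1) • vecMulVec (Pi.single i0 (1:ℝ)) (Pi.single i0 1) := by
      rw [SgM, SgM, add_assoc, ← add_smul]
      ring_nf
    rw [hdecomp, Matrix.add_mul, Matrix.smul_mul, hEN, smul_zero, add_zero, hN,
      ← Matrix.mul_assoc, Matrix.mul_nonsing_inv _ hdet1, Matrix.one_mul]
  have hinvS : ∀ t : ℝ, 0 < t → (SgM B q i0 t)⁻¹ * S = N := by
    intro t ht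
    have hdt : IsUnit (SgM B q i0 t).det := (SgM_posDef B q i0 hB hq t ht).det_pos.ne'.isUnit
    rw [← hmulN t, ← Matrix.mul_assoc, Matrix.nonsing_inv_mul _ hdt, Matrix.one_mul]
  set T : ℝ := N.trace with hT
  set t : ℝ := Real.exp (-(y + T + 1)) / c with htdef
  have htpos : 0 < t := div_pos (Real.exp_pos _) hcpos
  have htc : t * c = Real.exp (-(y + T + 1)) := div_mul_cancel₀ _ hcpos.ne'
  refine ⟨SgM B q i0 t, ⟨SgM_posDef B q i0 hB hq t htpos, fun i j hij hadj =>
    SgM_pattern B q i0 t i j hij hadj⟩, ?_⟩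
  rw [loglik, hinvS t htpos, ← hT, SgM_det B q i0 hq t, ← hc, htc, Real.log_exp]
  linarith


end Key

/-- If `B` is a connected simple graph on `p` vertices, `S` is positive semidefinite and
some vector `q` with all coordinates nonzero satisfies `Sq = 0`, then the log-likelihood
is unbounded above on `PD(B)`. -/
theorem pdb_loglik_unbounded_of_kernel_vector (p : ℕ) (B : SimpleGraph (Fin p))
    (hB : B.Connected) (S : Matrix (Fin p) (Fin p) ℝ) (hS : S.PosSemidef)
    (q : Fin p → ℝ) (hq : ∀ i, q i ≠ 0) (hSq : S.mulVec q = 0) :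
    (⨆ Sig ∈ PDB B, (loglik Sig S : EReal)) = ⊤ := by
  classical
  rw [iSup₂_eq_top]
  intro b hb
  obtain ⟨y, hby, -⟩ := EReal.exists_between_coe_real hb
  obtain ⟨Sig, hSig, hy⟩ := key_exists B hB S hS q hq hSq y
  exact ⟨Sig, hSig, lt_of_lt_of_le hby (by exact_mod_cast hy.le)⟩

end
end

section
/- Let G=(V,D,B) be a mixed graph on V={1,...,p} and let C_1,...,C_l be the vertex sets of the connected components of its bidirected part G_↔=(V,∅,B). Let X ∈ ℝ^{n×p} be a data matrix such that for every j=1,...,l the columns of X indexed by Pa(C_j) are linearly independent. Then the log-likelihood is bounded above on PD(G): sup_{Σ ∈ PD(G)} ℓ(Σ | (1/n)XᵀX) < ∞. -/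
open Matrix MeasureTheory Filter

open scoped Classical

noncomputable section AuxiliaryLemmas

set_option linter.unusedSectionVars false

variable {ι : Type} [Fintype ι] [DecidableEq ι]

lemma star_triv (x : ι → ℝ) : star x = x := by
  funext i; simp

/-- PSD matrix with nonzero determinant is PD. -/
lemma posDef_of_posSemidef_det_ne_zero {P : Matrix ι ι ℝ} (hP : P.PosSemidef)
    (hd : P.det ≠ 0) : P.PosDef := by
  exact hP.posDef_iff_det_ne_zero.mpr hd

lemma trace_eq_sum_eigenvalues {A : Matrix ι ι ℝ} (hA : A.IsHermitian) :
    A.trace = ∑ i, hA.eigenvalues i := by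
  have h := hA.spectral_theorem
  set U : Matrix ι ι ℝ := (hA.eigenvectorUnitary : Matrix ι ι ℝ) with hU
  calc A.trace = (U * (Matrix.diagonal (RCLike.ofReal ∘ hA.eigenvalues)) * star U).trace := by
        exact congrArg Matrix.trace h
    _ = (star U * U * (Matrix.diagonal (RCLike.ofReal ∘ hA.eigenvalues))).trace := by
        rw [Matrix.trace_mul_cycle]
    _ = (Matrix.diagonal (RCLike.ofReal ∘ hA.eigenvalues)).trace := by
        rw [Matrix.mem_unitaryGroup_iff'.mp hA.eigenvectorUnitary.2, Matrix.one_mul]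
    _ = ∑ i, hA.eigenvalues i := by
        rw [Matrix.trace_diagonal]; simp [RCLike.ofReal]

/-- `log det ≤ trace - card` for PD matrices. -/
lemma log_det_le {N : Matrix ι ι ℝ} (hN : N.PosDef) :
    Real.log N.det ≤ N.trace - Fintype.card ι := by
  have hdet : N.det = ∏ i, hN.isHermitian.eigenvalues i := by
    simpa using hN.isHermitian.det_eq_prod_eigenvalues
  have hpos : ∀ i, 0 < hN.isHermitian.eigenvalues i := hN.eigenvalues_pos
  rw [hdet, Real.log_prod (fun i _ => (hpos i).ne'),
    trace_eq_sum_eigenvalues hN.isHermitian]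
  have : ∀ i ∈ Finset.univ, Real.log (hN.isHermitian.eigenvalues i) ≤
      hN.isHermitian.eigenvalues i - 1 := fun i _ => Real.log_le_sub_one_of_pos (hpos i)
  calc ∑ i, Real.log (hN.isHermitian.eigenvalues i)
      ≤ ∑ i, (hN.isHermitian.eigenvalues i - 1) := Finset.sum_le_sum this
    _ = (∑ i, hN.isHermitian.eigenvalues i) - Fintype.card ι := by
        rw [Finset.sum_sub_distrib]; simp [Finset.card_univ]

lemma one_le_det_one_add {F : Matrix ι ι ℝ} (hF : F.PosSemidef) :
    1 ≤ (1 + F).det := by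
  have hH : (1 + F).IsHermitian := Matrix.isHermitian_one.add hF.1
  have heig : ∀ j, 1 ≤ hH.eigenvalues j := by
    intro j
    have h1 : (1 + F) *ᵥ ⇑(hH.eigenvectorBasis j) = hH.eigenvalues j • ⇑(hH.eigenvectorBasis j) :=
      hH.mulVec_eigenvectorBasis j
    set u : ι → ℝ := ⇑(hH.eigenvectorBasis j) with hu
    have hF1 : F *ᵥ u = (hH.eigenvalues j - 1) • u := by
      have hadd : (1 + F) *ᵥ u = u + F *ᵥ u := by
        rw [Matrix.add_mulVec, Matrix.one_mulVec]
      have := hadd.symm.trans h1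
      rw [sub_smul, one_smul]
      rw [eq_comm, ← sub_eq_iff_eq_add'] at this
      rw [← this]
    have hquad : 0 ≤ star u ⬝ᵥ (F *ᵥ u) := hF.dotProduct_mulVec_nonneg u
    rw [hF1] at hquad
    have huu : star u ⬝ᵥ u = 1 := by
      have := hH.eigenvectorBasis.orthonormal.1 j
      have h2 : (‖hH.eigenvectorBasis j‖ : ℝ) = 1 := this
      have h3 : (star u) ⬝ᵥ u = ‖hH.eigenvectorBasis j‖ ^ 2 := by
        rw [EuclideanSpace.norm_eq]
        rw [Real.sq_sqrt (by positivity)]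
        simp [dotProduct, hu, mul_comm, sq]
      rw [h3, h2]; norm_num
    have : star u ⬝ᵥ ((hH.eigenvalues j - 1) • u) = (hH.eigenvalues j - 1) := by
      rw [dotProduct_smul, huu]; simp
    rw [this] at hquad; linarith
  have hdet : (1 + F).det = ∏ i, hH.eigenvalues i := by
    simpa using hH.det_eq_prod_eigenvalues
  rw [hdet]
  calc (1:ℝ) = ∏ _i : ι, (1:ℝ) := by simp
    _ ≤ ∏ i, hH.eigenvalues i :=
      Finset.prod_le_prod (fun i _ => zero_le_one) (fun i _ => heig i)

lemma posSemidef_det_nonneg {P : Matrix ι ι ℝ} (hP : P.PosSemidef) : 0 ≤ P.det := by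
  have hdet : P.det = ∏ i, hP.1.eigenvalues i := by simpa using hP.1.det_eq_prod_eigenvalues
  rw [hdet]
  exact Finset.prod_nonneg fun i _ => hP.eigenvalues_nonneg i

open scoped MatrixOrder in
lemma exists_psd_sqrt {P : Matrix ι ι ℝ} (hP : P.PosSemidef) :
    ∃ Rt : Matrix ι ι ℝ, Rt.PosSemidef ∧ Rt * Rt = P :=
  ⟨CFC.sqrt P, (CFC.sqrt_nonneg P).posSemidef, CFC.sqrt_mul_sqrt_self P hP.nonneg⟩

lemma det_le_det_add {P E : Matrix ι ι ℝ} (hP : P.PosSemidef) (hE : E.PosSemidef) :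
    P.det ≤ (P + E).det := by
  rcases eq_or_ne P.det 0 with h0 | h0
  · rw [h0]; exact posSemidef_det_nonneg (hP.add hE)
  have hPD : P.PosDef := posDef_of_posSemidef_det_ne_zero hP h0
  obtain ⟨Rt, hRtPSD, hRtsq⟩ := exists_psd_sqrt hP
  have hRtdet : Rt.det ≠ 0 := by
    intro h; apply h0; rw [← hRtsq, Matrix.det_mul, h, mul_zero]
  have hRtPD : Rt.PosDef := posDef_of_posSemidef_det_ne_zero hRtPSD hRtdet
  have hRtU : IsUnit Rt.det := isUnit_iff_ne_zero.mpr hRtdet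
  have hRtH : Rtᴴ = Rt := hRtPD.isHermitian
  have hRtIH : (Rt⁻¹)ᴴ = Rt⁻¹ := hRtPD.inv.isHermitian
  set F := Rt⁻¹ * E * Rt⁻¹ with hFdef
  have hFPSD : F.PosSemidef := by
    have := hE.conjTranspose_mul_mul_same (Rt⁻¹)
    rwa [hRtIH] at this
  have key : P + E = Rt * (1 + F) * Rt := by
    rw [Matrix.mul_add, Matrix.add_mul, Matrix.mul_one, hRtsq, hFdef]
    congr 1
    symm
    calc Rt * (Rt⁻¹ * E * Rt⁻¹) * Rt = (Rt * Rt⁻¹) * E * (Rt⁻¹ * Rt) := by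
          noncomm_ring
      _ = E := by rw [Matrix.mul_nonsing_inv _ hRtU, Matrix.nonsing_inv_mul _ hRtU,
          Matrix.one_mul, Matrix.mul_one]
  rw [key, Matrix.det_mul, Matrix.det_mul]
  have h1F := one_le_det_one_add hFPSD
  calc P.det = Rt.det * 1 * Rt.det := by rw [mul_one, ← Matrix.det_mul, hRtsq]
    _ ≤ Rt.det * (1 + F).det * Rt.det := by
        have hRd : 0 < Rt.det := hRtPD.det_pos
        have : Rt.det * 1 ≤ Rt.det * (1+F).det := by
          exact mul_le_mul_of_nonneg_left h1F hRd.le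
        exact mul_le_mul_of_nonneg_right this hRd.le

lemma exists_pos_quadratic_lower (G : Matrix ι ι ℝ) (hG : G.PosDef) :
    ∃ κ : ℝ, 0 < κ ∧ ∀ x : ι → ℝ, κ * (x ⬝ᵥ x) ≤ x ⬝ᵥ (G *ᵥ x) := by
  rcases isEmpty_or_nonempty ι with hι | hι
  · exact ⟨1, one_pos, fun x => by simp [dotProduct]⟩
  obtain ⟨d, U, hUmem, hdpos, hGdec⟩ : ∃ (d : ι → ℝ) (U : Matrix ι ι ℝ),
      U ∈ Matrix.unitaryGroup ι ℝ ∧ (∀ i, 0 < d i) ∧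
      G = U * Matrix.diagonal d * star U := by
    refine ⟨hG.isHermitian.eigenvalues, hG.isHermitian.eigenvectorUnitary,
      hG.isHermitian.eigenvectorUnitary.2, hG.eigenvalues_pos, ?_⟩
    exact hG.isHermitian.spectral_theorem
  obtain ⟨v0, -, hv0⟩ := Finset.exists_min_image Finset.univ d
    ⟨Classical.arbitrary ι, Finset.mem_univ _⟩
  refine ⟨d v0, hdpos v0, fun x => ?_⟩
  have hUU : U * star U = 1 := Matrix.mem_unitaryGroup_iff.mp hUmem
  have hstar : ∀ w : ι → ℝ, star U *ᵥ w = w ᵥ* U := fun w => by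
    rw [Matrix.star_eq_conjTranspose, Matrix.conjTranspose_eq_transpose_of_trivial,
      Matrix.mulVec_transpose]
  set y : ι → ℝ := star U *ᵥ x with hy
  have hyy : y ⬝ᵥ y = x ⬝ᵥ x := by
    calc y ⬝ᵥ y = (x ᵥ* U) ⬝ᵥ (star U *ᵥ x) := by rw [← hy, hy, hstar x]
      _ = x ⬝ᵥ (U *ᵥ (star U *ᵥ x)) := (Matrix.dotProduct_mulVec _ _ _).symm
      _ = x ⬝ᵥ x := by rw [Matrix.mulVec_mulVec, hUU, Matrix.one_mulVec]
  have hquad : x ⬝ᵥ (G *ᵥ x) = ∑ i, d i * (y i)^2 := by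
    calc x ⬝ᵥ (G *ᵥ x)
        = x ⬝ᵥ (U *ᵥ (Matrix.diagonal d *ᵥ (star U *ᵥ x))) := by
          rw [hGdec, Matrix.mulVec_mulVec, Matrix.mulVec_mulVec]
      _ = (x ᵥ* U) ⬝ᵥ (Matrix.diagonal d *ᵥ y) := by
          rw [Matrix.dotProduct_mulVec, hy]
      _ = y ⬝ᵥ (Matrix.diagonal d *ᵥ y) := by rw [← hstar x, ← hy]
      _ = ∑ i, d i * (y i)^2 := by
          simp only [dotProduct, Matrix.mulVec_diagonal]
          congr 1; ext i; ring
  rw [hquad, ← hyy, dotProduct, Finset.mul_sum]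
  refine Finset.sum_le_sum fun i _ => ?_
  have : y i * y i = (y i)^2 := by ring
  rw [this]
  exact mul_le_mul_of_nonneg_right (hv0 i (Finset.mem_univ i)) (sq_nonneg _)

/-- The block-diagonal truncation of a matrix w.r.t. a relation `R`. -/
def bdm {ι : Type} (R : ι → ι → Prop) (Q : Matrix ι ι ℝ) : Matrix ι ι ℝ :=
  Matrix.of fun i j => if R i j then Q i j else 0

lemma bdm_apply {ι : Type} (R : ι → ι → Prop) (Q : Matrix ι ι ℝ) (i j : ι) :
    bdm R Q i j = if R i j then Q i j else 0 := rfl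

variable {R : ι → ι → Prop}

lemma bdm_sub (Q P : Matrix ι ι ℝ) : bdm R (Q - P) = bdm R Q - bdm R P := by
  ext i j; by_cases h : R i j <;> simp [bdm_apply, h]

lemma bdm_smul (c : ℝ) (Q : Matrix ι ι ℝ) : bdm R (c • Q) = c • bdm R Q := by
  ext i j; by_cases h : R i j <;> simp [bdm_apply, h]

section rel
variable (hRr : ∀ i, R i i) (hRs : ∀ {i j}, R i j → R j i)
  (hRt : ∀ {i j k}, R i j → R j k → R i k)

include hRr hRs hRt in
/-- The inverse of an invertible matrix supported on the blocks of an equivalence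
relation is supported on the blocks. -/
lemma inv_pattern {Ω : Matrix ι ι ℝ} (hd : IsUnit Ω.det)
    (hP : ∀ i j, ¬ R i j → Ω i j = 0) :
    ∀ i j, ¬ R i j → Ω⁻¹ i j = 0 := by
  have key : Ω * bdm R Ω⁻¹ = 1 := by
    have h1 : Ω * Ω⁻¹ = 1 := Matrix.mul_nonsing_inv Ω hd
    ext i k
    rw [Matrix.mul_apply]
    by_cases hik : R i k
    · have : ∀ j ∈ Finset.univ, Ω i j * bdm R Ω⁻¹ j k = Ω i j * Ω⁻¹ j k := by
        intro j _
        by_cases hjk : R j k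
        · rw [bdm_apply, if_pos hjk]
        · have hij : ¬ R i j := fun hij => hjk (hRt (hRs hij) hik)
          rw [hP i j hij, zero_mul, zero_mul]
      rw [Finset.sum_congr rfl this, ← Matrix.mul_apply, h1]
    · have hik' : i ≠ k := fun h => hik (h ▸ hRr i)
      rw [Matrix.one_apply_ne hik']
      apply Finset.sum_eq_zero
      intro j _
      by_cases hjk : R j k
      · have hij : ¬ R i j := fun hij => hik (hRt hij hjk)
        rw [hP i j hij, zero_mul]
      · rw [bdm_apply, if_neg hjk, mul_zero]
  have : Ω⁻¹ = bdm R Ω⁻¹ := Matrix.inv_eq_right_inv key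
  intro i j hij
  rw [this, bdm_apply, if_neg hij]

include hRr hRs hRt in
lemma bdm_form_nonneg {Q : Matrix ι ι ℝ}
    (hclass : ∀ (v : ι) (y : ι → ℝ), (∀ j, y j ≠ 0 → R v j) → 0 ≤ y ⬝ᵥ (Q *ᵥ y)) :
    ∀ x : ι → ℝ, 0 ≤ x ⬝ᵥ (bdm R Q *ᵥ x) := by
  suffices H : ∀ (N : ℕ) (x : ι → ℝ), (Finset.univ.filter fun i => x i ≠ 0).card ≤ N →
      0 ≤ x ⬝ᵥ (bdm R Q *ᵥ x) from fun x => H _ x le_rfl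
  intro N
  induction N with
  | zero =>
    intro x hx
    have hx0 : x = 0 := by
      funext i
      by_contra h
      have : i ∈ Finset.univ.filter fun i => x i ≠ 0 := by
        simp only [Finset.mem_filter, Finset.mem_univ, true_and]; exact h
      have := Finset.card_pos.mpr ⟨i, this⟩
      omega
    simp [hx0]
  | succ N ih =>
    intro x hx
    by_cases hx0 : x = 0
    · simp [hx0]
    obtain ⟨i0, hi0⟩ : ∃ i0, x i0 ≠ 0 := Function.ne_iff.mp hx0
    set y : ι → ℝ := fun j => if R i0 j then x j else 0 with hydef
    set z : ι → ℝ := fun j => if R i0 j then 0 else x j with hzdef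
    have hxyz : x = y + z := by
      funext j; by_cases h : R i0 j <;> simp [hydef, hzdef, h]
    have hyR : ∀ j, y j ≠ 0 → R i0 j := by
      intro j hj; by_contra h; simp [hydef, h] at hj
    have hzR : ∀ j, z j ≠ 0 → ¬ R i0 j := by
      intro j hj h; simp [hzdef, h] at hj
    have cross1 : y ⬝ᵥ (bdm R Q *ᵥ z) = 0 := by
      apply Finset.sum_eq_zero
      intro i _
      by_cases hyi : y i = 0
      · simp [hyi]
      have hRi : R i0 i := hyR i hyi
      have : (bdm R Q *ᵥ z) i = 0 := by
        apply Finset.sum_eq_zero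
        intro j _
        by_cases hij : R i j
        · have : R i0 j := hRt hRi hij
          have : z j = 0 := by simp [hzdef, this]
          simp [this]
        · simp [bdm_apply, hij]
      simp [this]
    have cross2 : z ⬝ᵥ (bdm R Q *ᵥ y) = 0 := by
      apply Finset.sum_eq_zero
      intro i _
      by_cases hzi : z i = 0
      · simp [hzi]
      have hRi : ¬ R i0 i := hzR i hzi
      have : (bdm R Q *ᵥ y) i = 0 := by
        apply Finset.sum_eq_zero
        intro j _
        by_cases hij : R i j
        · by_cases hyj : y j = 0
          · simp [hyj]
          · exact absurd (hRt (hyR j hyj) (hRs hij)) hRi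
        · simp [bdm_apply, hij]
      simp [this]
    have hyy : y ⬝ᵥ (bdm R Q *ᵥ y) = y ⬝ᵥ (Q *ᵥ y) := by
      apply Finset.sum_congr rfl
      intro i _
      by_cases hyi : y i = 0
      · simp [hyi]
      have hRi : R i0 i := hyR i hyi
      congr 1
      apply Finset.sum_congr rfl
      intro j _
      by_cases hyj : y j = 0
      · simp [hyj]
      · show bdm R Q i j * y j = Q i j * y j
        rw [bdm_apply, if_pos (hRt (hRs hRi) (hyR j hyj))]
    have hznum : (Finset.univ.filter fun i => z i ≠ 0).card ≤ N := by
      have hsub : (Finset.univ.filter fun i => z i ≠ 0) ⊆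
          (Finset.univ.filter fun i => x i ≠ 0).erase i0 := by
        intro j hj
        simp only [Finset.mem_filter, Finset.mem_univ, true_and] at hj
        have h1 : ¬ R i0 j := hzR j hj
        have h2 : x j ≠ 0 := by
          intro h; apply hj; simp [hzdef, h]
        have h3 : j ≠ i0 := fun h => h1 (h ▸ hRr i0)
        simp only [Finset.mem_erase, Finset.mem_filter, Finset.mem_univ, true_and]
        exact ⟨h3, h2⟩
      have hmem : i0 ∈ Finset.univ.filter fun i => x i ≠ 0 := by
        simp only [Finset.mem_filter, Finset.mem_univ, true_and]; exact hi0
      calc (Finset.univ.filter fun i => z i ≠ 0).card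
          ≤ ((Finset.univ.filter fun i => x i ≠ 0).erase i0).card := Finset.card_le_card hsub
        _ = (Finset.univ.filter fun i => x i ≠ 0).card - 1 := Finset.card_erase_of_mem hmem
        _ ≤ N := by omega
    have expand : x ⬝ᵥ (bdm R Q *ᵥ x) = y ⬝ᵥ (bdm R Q *ᵥ y) + y ⬝ᵥ (bdm R Q *ᵥ z)
        + z ⬝ᵥ (bdm R Q *ᵥ y) + z ⬝ᵥ (bdm R Q *ᵥ z) := by
      rw [hxyz, Matrix.mulVec_add, dotProduct_add, add_dotProduct,
        add_dotProduct]
      ring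
    rw [expand, cross1, cross2, hyy]
    have h1 : 0 ≤ y ⬝ᵥ (Q *ᵥ y) := hclass i0 y hyR
    have h2 : 0 ≤ z ⬝ᵥ (bdm R Q *ᵥ z) := ih z hznum
    linarith

include hRr hRs hRt in
lemma bdm_posDef {Q : Matrix ι ι ℝ} (hQH : Q.IsHermitian)
    (hclass : ∀ (v : ι) (y : ι → ℝ), (∀ j, y j ≠ 0 → R v j) → y ≠ 0 →
      0 < y ⬝ᵥ (Q *ᵥ y)) :
    (bdm R Q).PosDef := by
  have hclass' : ∀ (v : ι) (y : ι → ℝ), (∀ j, y j ≠ 0 → R v j) → 0 ≤ y ⬝ᵥ (Q *ᵥ y) := by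
    intro v y hy
    by_cases h : y = 0
    · simp [h]
    · exact (hclass v y hy h).le
  refine Matrix.PosDef.of_dotProduct_mulVec_pos ?_ ?_
  · ext i j
    simp only [Matrix.conjTranspose_apply, bdm_apply, star_trivial]
    by_cases h : R i j
    · rw [if_pos (hRs h), if_pos h]
      have := hQH.apply i j
      simpa using this
    · rw [if_neg (fun h' => h (hRs h')), if_neg h]
  · intro x hx
    rw [star_triv]
    obtain ⟨i0, hi0⟩ : ∃ i0, x i0 ≠ 0 := Function.ne_iff.mp hx
    set y : ι → ℝ := fun j => if R i0 j then x j else 0 with hydef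
    set z : ι → ℝ := fun j => if R i0 j then 0 else x j with hzdef
    have hxyz : x = y + z := by
      funext j; by_cases h : R i0 j <;> simp [hydef, hzdef, h]
    have hyR : ∀ j, y j ≠ 0 → R i0 j := by
      intro j hj; by_contra h; simp [hydef, h] at hj
    have hzR : ∀ j, z j ≠ 0 → ¬ R i0 j := by
      intro j hj h; simp [hzdef, h] at hj
    have cross1 : y ⬝ᵥ (bdm R Q *ᵥ z) = 0 := by
      apply Finset.sum_eq_zero
      intro i _
      by_cases hyi : y i = 0
      · simp [hyi]
      have hRi : R i0 i := hyR i hyi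
      have : (bdm R Q *ᵥ z) i = 0 := by
        apply Finset.sum_eq_zero
        intro j _
        by_cases hij : R i j
        · have : R i0 j := hRt hRi hij
          have : z j = 0 := by simp [hzdef, this]
          simp [this]
        · simp [bdm_apply, hij]
      simp [this]
    have cross2 : z ⬝ᵥ (bdm R Q *ᵥ y) = 0 := by
      apply Finset.sum_eq_zero
      intro i _
      by_cases hzi : z i = 0
      · simp [hzi]
      have hRi : ¬ R i0 i := hzR i hzi
      have : (bdm R Q *ᵥ y) i = 0 := by
        apply Finset.sum_eq_zero
        intro j _
        by_cases hij : R i j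
        · by_cases hyj : y j = 0
          · simp [hyj]
          · exact absurd (hRt (hyR j hyj) (hRs hij)) hRi
        · simp [bdm_apply, hij]
      simp [this]
    have hyy : y ⬝ᵥ (bdm R Q *ᵥ y) = y ⬝ᵥ (Q *ᵥ y) := by
      apply Finset.sum_congr rfl
      intro i _
      by_cases hyi : y i = 0
      · simp [hyi]
      have hRi : R i0 i := hyR i hyi
      congr 1
      apply Finset.sum_congr rfl
      intro j _
      by_cases hyj : y j = 0
      · simp [hyj]
      · show bdm R Q i j * y j = Q i j * y j
        rw [bdm_apply, if_pos (hRt (hRs hRi) (hyR j hyj))]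
    have expand : x ⬝ᵥ (bdm R Q *ᵥ x) = y ⬝ᵥ (bdm R Q *ᵥ y) + y ⬝ᵥ (bdm R Q *ᵥ z)
        + z ⬝ᵥ (bdm R Q *ᵥ y) + z ⬝ᵥ (bdm R Q *ᵥ z) := by
      rw [hxyz, Matrix.mulVec_add, dotProduct_add, add_dotProduct,
        add_dotProduct]
      ring
    have hyne : y ≠ 0 := by
      intro h
      have : y i0 = 0 := by rw [h]; rfl
      rw [hydef] at this
      simp only [if_pos (hRr i0)] at this
      exact hi0 this
    have h1 : 0 < y ⬝ᵥ (Q *ᵥ y) := hclass i0 y hyR hyne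
    have h2 : 0 ≤ z ⬝ᵥ (bdm R Q *ᵥ z) :=
      bdm_form_nonneg hRr (fun h => hRs h) (fun h1 h2 => hRt h1 h2) hclass' z
    rw [expand, cross1, cross2, hyy]
    linarith

end rel

lemma sum_ext_zero (pr : ι → Prop) [Fintype {a // pr a}] (f : ι → ℝ) (h0 : ∀ a, ¬ pr a → f a = 0) :
    ∑ a, f a = ∑ a : {a // pr a}, f a.1 := by
  rw [← Finset.sum_filter_add_sum_filter_not Finset.univ pr f]
  have h2 : ∑ a ∈ Finset.univ.filter (fun a => ¬ pr a), f a = 0 :=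
    Finset.sum_eq_zero fun a ha => h0 a (Finset.mem_filter.mp ha).2
  rw [h2, add_zero]
  exact Finset.sum_subtype _ (fun a => by simp) f

lemma dotProduct_submatrix_val (pr : ι → Prop) [Fintype {a // pr a}] (M : Matrix ι ι ℝ) (x : {a // pr a} → ℝ)
    (xe : ι → ℝ) (hxe : ∀ a : {a // pr a}, xe a.1 = x a) (hxe0 : ∀ a, ¬ pr a → xe a = 0) :
    x ⬝ᵥ ((M.submatrix (Subtype.val) (Subtype.val)) *ᵥ x) = xe ⬝ᵥ (M *ᵥ xe) := by
  have hmv : ∀ a : {a // pr a}, (M *ᵥ xe) a.1 = ((M.submatrix Subtype.val Subtype.val) *ᵥ x) a := by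
    intro a
    show ∑ b, M a.1 b * xe b = _
    rw [sum_ext_zero pr (fun b => M a.1 b * xe b)
      (fun b hb => by show M a.1 b * xe b = 0; rw [hxe0 b hb, mul_zero])]
    apply Finset.sum_congr rfl
    intro b _
    rw [hxe b]
    rfl
  calc x ⬝ᵥ ((M.submatrix (Subtype.val) (Subtype.val)) *ᵥ x)
      = ∑ a : {a // pr a}, xe a.1 * (M *ᵥ xe) a.1 := by
        apply Finset.sum_congr rfl
        intro a _
        rw [hxe a, hmv a]
    _ = ∑ a, xe a * (M *ᵥ xe) a := (sum_ext_zero pr (fun a => xe a * (M *ᵥ xe) a)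
        (fun a ha => by show xe a * (M *ᵥ xe) a = 0; rw [hxe0 a ha, zero_mul])).symm
    _ = xe ⬝ᵥ (M *ᵥ xe) := rfl

lemma posDef_submatrix_subtype {M : Matrix ι ι ℝ} (hM : M.PosDef) (pr : ι → Prop)
    [Fintype {a // pr a}] :
    (M.submatrix (Subtype.val : {a // pr a} → ι) Subtype.val).PosDef := by
  refine Matrix.PosDef.of_dotProduct_mulVec_pos ?_ ?_
  · have := hM.isHermitian
    ext i j
    simp only [Matrix.conjTranspose_apply, Matrix.submatrix_apply, star_trivial]
    have := hM.isHermitian.apply j.1 i.1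
    simpa using this.symm
  · intro x hx
    set xe : ι → ℝ := fun a => if h : pr a then x ⟨a, h⟩ else 0 with hxedef
    have hxe : ∀ a : {a // pr a}, xe a.1 = x a := fun a => by
      rw [hxedef]; simp [a.2]
    have hxe0 : ∀ a, ¬ pr a → xe a = 0 := fun a ha => by rw [hxedef]; simp [ha]
    have hxen : xe ≠ 0 := by
      obtain ⟨i, hi⟩ : ∃ i, x i ≠ 0 := Function.ne_iff.mp hx
      intro h
      apply hi
      rw [← hxe i, h]
      rfl
    have hpos := hM.dotProduct_mulVec_pos hxen
    rw [show star xe = xe from funext fun a => by simp] at hpos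
    rw [show star x = x from funext fun a => by simp]
    rw [dotProduct_submatrix_val pr M x xe hxe hxe0]
    exact hpos

lemma fischer_aux (N : ℕ) : ∀ (ι : Type) [Fintype ι] [DecidableEq ι]
    (R : ι → ι → Prop), Fintype.card ι ≤ N → (∀ i, R i i) →
    (∀ i j, R i j → R j i) → (∀ i j k, R i j → R j k → R i k) →
    ∀ (Q : Matrix ι ι ℝ), Q.PosDef → Q.det ≤ (bdm R Q).det := by
  induction N with
  | zero =>
    intro ι _ _ R hcard hRr hRs hRt Q hQ
    haveI : IsEmpty ι := Fintype.card_eq_zero_iff.mp (Nat.le_zero.mp hcard)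
    rw [Matrix.det_isEmpty, Matrix.det_isEmpty]
  | succ N ih =>
    intro ι _ _ R hcard hRr hRs hRt Q hQ
    rcases isEmpty_or_nonempty ι with hι | hι
    · rw [Matrix.det_isEmpty, Matrix.det_isEmpty]
    haveI := hι
    set v := Classical.arbitrary ι
    set pr : ι → Prop := fun a => R v a with hprdef
    set e := (Equiv.sumCompl pr).symm
    set A : Matrix {a // pr a} {a // pr a} ℝ :=
      Q.submatrix (Subtype.val : {a // pr a} → ι) (Subtype.val : {a // pr a} → ι) with hAdef
    set Bm : Matrix {a // pr a} {a // ¬ pr a} ℝ := Q.submatrix (Subtype.val : {a // pr a} → ι)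
      (Subtype.val : {a // ¬ pr a} → ι) with hBdef
    set Dm : Matrix {a // ¬ pr a} {a // ¬ pr a} ℝ :=
      Q.submatrix (Subtype.val : {a // ¬ pr a} → ι) (Subtype.val : {a // ¬ pr a} → ι) with hDdef
    have hA : A.PosDef := posDef_submatrix_subtype hQ pr
    have hD : Dm.PosDef := posDef_submatrix_subtype hQ (fun a => ¬ pr a)
    haveI : Invertible A := A.invertibleOfIsUnitDet (isUnit_iff_ne_zero.mpr hA.det_pos.ne')
    have hqe : Q.submatrix e.symm e.symm = Matrix.fromBlocks A Bm Bmᴴ Dm := by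
      ext i j
      cases i with
      | inl i => cases j with
        | inl j => rfl
        | inr j => rfl
      | inr i => cases j with
        | inl j =>
          show Q i.1 j.1 = Bmᴴ i j
          simp only [Matrix.conjTranspose_apply, hBdef, Matrix.submatrix_apply, star_trivial]
          have := hQ.isHermitian.apply i.1 j.1
          simpa using this.symm
        | inr j => rfl
    have hdetQ : Q.det = A.det * (Dm - Bmᴴ * A⁻¹ * Bm).det := by
      rw [← Matrix.det_submatrix_equiv_self e.symm Q, hqe, Matrix.det_fromBlocks₁₁,
        Matrix.invOf_eq_nonsing_inv]
    have hfbPSD : (Matrix.fromBlocks A Bm Bmᴴ Dm).PosSemidef := by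
      rw [← hqe]
      exact (Matrix.posSemidef_submatrix_equiv e.symm).mpr hQ.posSemidef
    have hS : (Dm - Bmᴴ * A⁻¹ * Bm).PosSemidef :=
      (Matrix.PosDef.fromBlocks₁₁ Bm Dm hA).mp hfbPSD
    have hE : (Bmᴴ * A⁻¹ * Bm).PosSemidef :=
      Matrix.PosSemidef.conjTranspose_mul_mul_same hA.inv.posSemidef Bm
    have hSD : (Dm - Bmᴴ * A⁻¹ * Bm).det ≤ Dm.det := by
      have := det_le_det_add hS hE
      rwa [sub_add_cancel] at this
    set R' : {a // ¬ pr a} → {a // ¬ pr a} → Prop := fun i j => R i.1 j.1 with hR'def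
    have hcard' : Fintype.card {a // ¬ pr a} ≤ N := by
      have h1 : Fintype.card ({a // pr a} ⊕ {a // ¬ pr a}) = Fintype.card ι :=
        Fintype.card_congr (Equiv.sumCompl pr)
      rw [Fintype.card_sum] at h1
      have h2 : 0 < Fintype.card {a // pr a} :=
        Fintype.card_pos_iff.mpr ⟨⟨v, hRr v⟩⟩
      omega
    have hrec : Dm.det ≤ (bdm R' Dm).det :=
      ih _ R' hcard' (fun i => hRr i.1) (fun i j h => hRs _ _ h)
        (fun i j k h1 h2 => hRt _ _ _ h1 h2) Dm hD
    have hbd : (bdm R Q).submatrix e.symm e.symm =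
        Matrix.fromBlocks A 0 0 (bdm R' Dm) := by
      ext i j
      cases i with
      | inl i => cases j with
        | inl j =>
          show bdm R Q i.1 j.1 = A i j
          rw [bdm_apply, if_pos (hRt _ _ _ (hRs _ _ i.2) j.2)]
          rfl
        | inr j =>
          show bdm R Q i.1 j.1 = 0
          rw [bdm_apply, if_neg (fun h => j.2 (hRt _ _ _ i.2 h))]
      | inr i => cases j with
        | inl j =>
          show bdm R Q i.1 j.1 = 0
          rw [bdm_apply, if_neg (fun h => i.2 (hRt _ _ _ j.2 (hRs _ _ h)))]
        | inr j =>
          show bdm R Q i.1 j.1 = bdm R' Dm i j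
          rw [bdm_apply, bdm_apply]
          rfl
    have hdetbd : (bdm R Q).det = A.det * (bdm R' Dm).det := by
      rw [← Matrix.det_submatrix_equiv_self e.symm (bdm R Q), hbd,
        Matrix.det_fromBlocks_zero₂₁]
    rw [hdetQ, hdetbd]
    calc A.det * (Dm - Bmᴴ * A⁻¹ * Bm).det ≤ A.det * Dm.det :=
          mul_le_mul_of_nonneg_left hSD hA.det_pos.le
      _ ≤ A.det * (bdm R' Dm).det := mul_le_mul_of_nonneg_left hrec hA.det_pos.le

lemma posDef_conj {A B : Matrix ι ι ℝ} (hA : A.PosDef) (hB : IsUnit B.det)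
    (hBH : B.IsHermitian) : (B * A * B).PosDef := by
  have hBt : Bᵀ = B := by
    have := hBH
    rwa [Matrix.IsHermitian, Matrix.conjTranspose_eq_transpose_of_trivial] at this
  refine Matrix.PosDef.of_dotProduct_mulVec_pos ?_ ?_
  · show (B * A * B)ᴴ = B * A * B
    rw [Matrix.conjTranspose_mul, Matrix.conjTranspose_mul, hA.isHermitian.eq, hBH.eq]
    rw [Matrix.mul_assoc]
  · intro x hx
    have hz : B *ᵥ x ≠ 0 := by
      intro h
      have hinj := Matrix.mulVec_injective_iff_isUnit.mpr
        ((Matrix.isUnit_iff_isUnit_det B).mpr hB)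
      exact hx (hinj (by simpa using h))
    calc (0:ℝ) < star (B *ᵥ x) ⬝ᵥ (A *ᵥ (B *ᵥ x)) := hA.dotProduct_mulVec_pos hz
      _ = star x ⬝ᵥ ((B * A * B) *ᵥ x) := by
          rw [show star (B *ᵥ x) = B *ᵥ x from funext fun a => by simp,
            show star x = x from funext fun a => by simp]
          rw [← Matrix.mulVec_mulVec, ← Matrix.mulVec_mulVec]
          rw [Matrix.dotProduct_mulVec x B, ← Matrix.mulVec_transpose, hBt]

lemma profile_ineq {Om M : Matrix ι ι ℝ} (hOm : Om.PosDef) (hM : M.PosDef) :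
    -Real.log Om.det - (Om⁻¹ * M).trace ≤ -Real.log M.det - Fintype.card ι := by
  obtain ⟨s, hsPSD, hss⟩ := exists_psd_sqrt hM.posSemidef
  have hsdet : s.det ≠ 0 := by
    intro h
    have : M.det = 0 := by rw [← hss, Matrix.det_mul, h, mul_zero]
    exact hM.det_pos.ne' this
  have hsPD : s.PosDef := posDef_of_posSemidef_det_ne_zero hsPSD hsdet
  have hN : (s * Om⁻¹ * s).PosDef :=
    posDef_conj hOm.inv (isUnit_iff_ne_zero.mpr hsdet) hsPD.isHermitian
  have htr : (s * Om⁻¹ * s).trace = (Om⁻¹ * M).trace := by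
    rw [Matrix.trace_mul_cycle, hss, Matrix.trace_mul_comm]
  have hdet : (s * Om⁻¹ * s).det = M.det * (Om.det)⁻¹ := by
    rw [Matrix.det_mul, Matrix.det_mul, Matrix.det_nonsing_inv, Ring.inverse_eq_inv']
    calc s.det * Om.det⁻¹ * s.det = (s.det * s.det) * Om.det⁻¹ := by ring
      _ = M.det * Om.det⁻¹ := by rw [← Matrix.det_mul, hss]
  have hlog := log_det_le hN
  rw [htr, hdet, Real.log_mul hM.det_pos.ne' (inv_ne_zero hOm.det_pos.ne'),
    Real.log_inv] at hlog
  linarith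

end AuxiliaryLemmas

noncomputable section MainTheorem

set_option maxHeartbeats 1000000 in
/-- If the columns of the data matrix `X` indexed by `Pa(C_j)` are linearly independent
for every connected component `C_j` of the bidirected part of the mixed graph
`G = (V, D, B)`, then the log-likelihood `ℓ(· | (1/n) XᵀX)` is bounded above on `PD(G)`. -/
theorem loglik_bounded_of_linearIndependent (p n : ℕ) (D : Set (Fin p × Fin p))
    (hD : ∀ i, (i, i) ∉ D) (B : SimpleGraph (Fin p))
    (X : Matrix (Fin n) (Fin p) ℝ)
    (hX : ∀ v : Fin p, LinearIndependent ℝ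
      (fun i : (Pa D {w | B.Reachable v w}) => (fun s : Fin n => X s i))) :
    (⨆ Sig ∈ PDG D B, (loglik Sig ((n : ℝ)⁻¹ • (Xᵀ * X)) : EReal)) < ⊤ := by
  set S : Matrix (Fin p) (Fin p) ℝ := (n : ℝ)⁻¹ • (Xᵀ * X) with hSdef
  rcases Nat.eq_zero_or_pos p with hp0 | hp
  · subst hp0
    refine lt_of_le_of_lt (iSup₂_le fun Sig _ => ?_) (EReal.coe_lt_top 0)
    have h0 : loglik Sig S = 0 := by
      simp [loglik, Matrix.det_isEmpty, Matrix.trace]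
    rw [h0]
  rcases Nat.eq_zero_or_pos n with hn0 | hn
  · exfalso
    subst hn0
    set v0 : Fin p := ⟨0, hp⟩
    have hmem : v0 ∈ Pa D {w | B.Reachable v0 w} := Or.inl (SimpleGraph.Reachable.refl v0)
    have hne := (hX v0).ne_zero ⟨v0, hmem⟩
    apply hne
    funext s
    exact s.elim0
  set R : Fin p → Fin p → Prop := fun i j => B.Reachable i j with hRdef
  have hRr : ∀ i, R i i := fun i => SimpleGraph.Reachable.refl i
  have hRs : ∀ {i j}, R i j → R j i := fun h => h.symm
  have hRt : ∀ {i j k}, R i j → R j k → R i k := fun h1 h2 => h1.trans h2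
  set Pv : Fin p → Set (Fin p) := fun v => Pa D {w | B.Reachable v w} with hPvdef
  have hSsym : S.IsHermitian := by
    rw [Matrix.IsHermitian, Matrix.conjTranspose_eq_transpose_of_trivial,
      hSdef, Matrix.transpose_smul, Matrix.transpose_mul, Matrix.transpose_transpose]
  have hGv : ∀ v : Fin p,
      (S.submatrix (Subtype.val : ↥(Pv v) → Fin p) Subtype.val).PosDef := by
    intro v
    refine Matrix.PosDef.of_dotProduct_mulVec_pos ?_ ?_
    · ext i j
      simp only [Matrix.conjTranspose_apply, Matrix.submatrix_apply, star_trivial]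
      have := hSsym.apply j.1 i.1
      simpa using this.symm
    · intro x hx
      rw [star_triv]
      set Y : Matrix (Fin n) ↥(Pv v) ℝ :=
        X.submatrix id (Subtype.val : ↥(Pv v) → Fin p) with hYdef
      have hsub : S.submatrix (Subtype.val : ↥(Pv v) → Fin p) Subtype.val
          = (n : ℝ)⁻¹ • (Yᵀ * Y) := by
        ext i j
        simp only [hSdef, Matrix.submatrix_apply, Matrix.smul_apply, Matrix.mul_apply,
          Matrix.transpose_apply, hYdef, smul_eq_mul, id]
      have hform : x ⬝ᵥ ((S.submatrix (Subtype.val : ↥(Pv v) → Fin p) Subtype.val) *ᵥ x)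
          = (n : ℝ)⁻¹ * ((Y *ᵥ x) ⬝ᵥ (Y *ᵥ x)) := by
        rw [hsub, Matrix.smul_mulVec, dotProduct_smul, smul_eq_mul]
        congr 1
        rw [← Matrix.mulVec_mulVec, Matrix.dotProduct_mulVec x Yᵀ, Matrix.vecMul_transpose]
      have hYx : Y *ᵥ x ≠ 0 := by
        intro h
        apply hx
        have h0 : ∑ i : ↥(Pv v), x i • (fun s : Fin n => X s i.1) = 0 := by
          funext s
          have hs : ∑ i, Y s i * x i = 0 := by
            have h' := congrFun h s
            simpa [Matrix.mulVec, dotProduct] using h'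
          simp only [Finset.sum_apply, Pi.smul_apply, smul_eq_mul, Pi.zero_apply]
          rw [← hs]
          apply Finset.sum_congr rfl
          intro i _
          simp [hYdef, mul_comm]
        funext i
        exact Fintype.linearIndependent_iff.mp (hX v) x h0 i
      rw [hform]
      have hdotpos : 0 < (Y *ᵥ x) ⬝ᵥ (Y *ᵥ x) := by
        refine lt_of_le_of_ne (Finset.sum_nonneg fun i _ => mul_self_nonneg _) ?_
        intro h'
        exact hYx (dotProduct_self_eq_zero.mp h'.symm)
      have hninv : (0:ℝ) < (n : ℝ)⁻¹ := by positivity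
      exact mul_pos hninv hdotpos
  choose κf hκpos hκineq using fun v => exists_pos_quadratic_lower _ (hGv v)
  obtain ⟨vm, -, hvm⟩ := Finset.exists_min_image Finset.univ κf ⟨⟨0, hp⟩, Finset.mem_univ _⟩
  set κ := κf vm with hκdef
  have hκ0 : 0 < κ := hκpos vm
  have hκle : ∀ v, κ ≤ κf v := fun v => hvm v (Finset.mem_univ v)
  set C : ℝ := -(p:ℝ) * Real.log κ - p with hCdef
  refine lt_of_le_of_lt (iSup₂_le fun Sig hSig => ?_) (EReal.coe_lt_top C)
  rw [EReal.coe_le_coe_iff]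
  obtain ⟨Λ, hΛ, Om, hOm, rfl⟩ := hSig
  obtain ⟨hΛpat, hAu⟩ := hΛ
  obtain ⟨hOmPD, hOmpat⟩ := hOm
  set A : Matrix (Fin p) (Fin p) ℝ := 1 - Λ with hAdef
  have hAdet : IsUnit A.det := (Matrix.isUnit_iff_isUnit_det A).mp hAu
  have hAd0 : A.det ≠ 0 := hAdet.ne_zero
  have hAinj := Matrix.mulVec_injective_iff_isUnit.mpr hAu
  have hOmdet : IsUnit Om.det := isUnit_iff_ne_zero.mpr hOmPD.det_pos.ne'
  have hiA : A⁻¹ * A = 1 := Matrix.nonsing_inv_mul A hAdet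
  have hAi : A * A⁻¹ = 1 := Matrix.mul_nonsing_inv A hAdet
  have hOmi : Om * Om⁻¹ = 1 := Matrix.mul_nonsing_inv Om hOmdet
  have hSiginv : ((A⁻¹)ᵀ * Om * A⁻¹)⁻¹ = A * Om⁻¹ * Aᵀ := by
    apply Matrix.inv_eq_right_inv
    calc (A⁻¹)ᵀ * Om * A⁻¹ * (A * Om⁻¹ * Aᵀ)
        = (A⁻¹)ᵀ * (Om * ((A⁻¹ * A) * (Om⁻¹ * Aᵀ))) := by
          simp only [Matrix.mul_assoc]
      _ = (A⁻¹)ᵀ * Aᵀ := by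
          rw [hiA, Matrix.one_mul,
            show Om * (Om⁻¹ * Aᵀ) = (Om * Om⁻¹) * Aᵀ from (Matrix.mul_assoc _ _ _).symm,
            hOmi, Matrix.one_mul]
      _ = 1 := by rw [← Matrix.transpose_mul, hAi, Matrix.transpose_one]
  have hd2 : (0:ℝ) < A.det ^ 2 := by positivity
  have hdetSig : ((A⁻¹)ᵀ * Om * A⁻¹).det = Om.det * ((A.det)^2)⁻¹ := by
    rw [Matrix.det_mul, Matrix.det_mul, Matrix.det_transpose, Matrix.det_nonsing_inv,
      Ring.inverse_eq_inv', sq, mul_inv]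
    ring
  set M : Matrix (Fin p) (Fin p) ℝ := Aᵀ * S * A with hMdef
  set Mb := bdm R M with hMbdef
  set Nmat : Matrix (Fin p) (Fin p) ℝ := Aᵀ * A with hNdef
  set Nb := bdm R Nmat with hNbdef
  have hOmRpat : ∀ i j, ¬ R i j → Om i j = 0 := by
    intro i j hij
    exact hOmpat i j (fun h => hij (h ▸ hRr i)) (fun hadj => hij hadj.reachable)
  have hOminvpat : ∀ i j, ¬ R i j → Om⁻¹ i j = 0 :=
    inv_pattern hRr (fun h => hRs h) (fun h1 h2 => hRt h1 h2) hOmdet hOmRpat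
  have htr1 : ((A * Om⁻¹ * Aᵀ) * S).trace = (Om⁻¹ * M).trace := by
    calc ((A * Om⁻¹ * Aᵀ) * S).trace = ((A * Om⁻¹) * (Aᵀ * S)).trace := by
          simp only [Matrix.mul_assoc]
      _ = ((Aᵀ * S) * (A * Om⁻¹)).trace := Matrix.trace_mul_comm _ _
      _ = ((Aᵀ * S * A) * Om⁻¹).trace := by simp only [Matrix.mul_assoc]
      _ = (Om⁻¹ * M).trace := by rw [Matrix.trace_mul_comm, hMdef]
  have htr2 : (Om⁻¹ * M).trace = (Om⁻¹ * Mb).trace := by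
    simp only [Matrix.trace, Matrix.diag, Matrix.mul_apply]
    apply Finset.sum_congr rfl; intro i _
    apply Finset.sum_congr rfl; intro j _
    show Om⁻¹ i j * M j i = Om⁻¹ i j * Mb j i
    by_cases hij : R i j
    · rw [hMbdef, bdm_apply, if_pos (hRs hij)]
    · rw [hOminvpat i j hij, zero_mul, zero_mul]
  have hz_supp : ∀ (v : Fin p) (y : Fin p → ℝ), (∀ j, y j ≠ 0 → R v j) →
      ∀ k, k ∉ Pv v → (A *ᵥ y) k = 0 := by
    intro v y hy k hk
    show ∑ j, A k j * y j = 0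
    apply Finset.sum_eq_zero
    intro j _
    show A k j * y j = 0
    by_cases hyj : y j = 0
    · rw [hyj, mul_zero]
    have hRvj : R v j := hy j hyj
    have hjPv : j ∈ Pv v := Or.inl hRvj
    have hkj : k ≠ j := fun h => hk (h ▸ hjPv)
    have hΛkj : Λ k j = 0 := by
      apply hΛpat
      intro hD'
      exact hk (Or.inr ⟨j, hRvj, hD'⟩)
    rw [hAdef]
    simp [Matrix.sub_apply, Matrix.one_apply_ne hkj, hΛkj]
  have hformM : ∀ (y : Fin p → ℝ), y ⬝ᵥ (M *ᵥ y) = (A *ᵥ y) ⬝ᵥ (S *ᵥ (A *ᵥ y)) := by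
    intro y
    rw [hMdef, ← Matrix.mulVec_mulVec, ← Matrix.mulVec_mulVec,
      Matrix.dotProduct_mulVec y Aᵀ, Matrix.vecMul_transpose]
  have hformN : ∀ (y : Fin p → ℝ), y ⬝ᵥ (Nmat *ᵥ y) = (A *ᵥ y) ⬝ᵥ (A *ᵥ y) := by
    intro y
    rw [hNdef, ← Matrix.mulVec_mulVec, Matrix.dotProduct_mulVec y Aᵀ,
      Matrix.vecMul_transpose]
  have hSz : ∀ (v : Fin p) (y : Fin p → ℝ), (∀ j, y j ≠ 0 → R v j) →
      κf v * ((A *ᵥ y) ⬝ᵥ (A *ᵥ y)) ≤ (A *ᵥ y) ⬝ᵥ (S *ᵥ (A *ᵥ y)) ∧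
      ((A *ᵥ y) ≠ 0 → 0 < (A *ᵥ y) ⬝ᵥ (S *ᵥ (A *ᵥ y))) := by
    intro v y hy
    set z := A *ᵥ y with hzdef2
    set x' : {a // a ∈ Pv v} → ℝ := fun a => z a.1 with hx'def
    have hxe : ∀ a : {a // a ∈ Pv v}, z a.1 = x' a := fun a => rfl
    have hxe0 : ∀ a, ¬ (a ∈ Pv v) → z a = 0 := fun a ha => hz_supp v y hy a ha
    have hdot := dotProduct_submatrix_val (fun a => a ∈ Pv v) S x' z hxe hxe0
    have hdotzz : z ⬝ᵥ z = x' ⬝ᵥ x' := by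
      rw [dotProduct,
        sum_ext_zero (fun a => a ∈ Pv v) (fun a => z a * z a)
          (fun a ha => by show z a * z a = 0; rw [hxe0 a ha, zero_mul])]
      rfl
    constructor
    · calc κf v * (z ⬝ᵥ z) = κf v * (x' ⬝ᵥ x') := by rw [hdotzz]
        _ ≤ x' ⬝ᵥ ((S.submatrix Subtype.val Subtype.val) *ᵥ x') := hκineq v x'
        _ = z ⬝ᵥ (S *ᵥ z) := hdot
    · intro hzne
      have hx'ne : x' ≠ 0 := by
        obtain ⟨k, hk⟩ := Function.ne_iff.mp hzne
        have hkPv : k ∈ Pv v := by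
          by_contra h; exact hk (hxe0 k h)
        intro h
        apply hk
        have : x' ⟨k, hkPv⟩ = 0 := by rw [h]; rfl
        exact this
      have hpos := (hGv v).dotProduct_mulVec_pos hx'ne
      rw [star_triv] at hpos
      rw [← hdot]
      exact hpos
  have hMH : M.IsHermitian := by
    have h1 : Mᴴ = Aᴴ * (Sᴴ * (Aᵀ)ᴴ) := by
      rw [hMdef, Matrix.conjTranspose_mul, Matrix.conjTranspose_mul]
    rw [Matrix.IsHermitian, h1, hSsym.eq, Matrix.conjTranspose_eq_transpose_of_trivial A,
      Matrix.conjTranspose_eq_transpose_of_trivial (Aᵀ), Matrix.transpose_transpose,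
      hMdef, Matrix.mul_assoc]
  have hNH : Nmat.IsHermitian := by
    have h1 : Nmatᴴ = Aᴴ * (Aᵀ)ᴴ := by
      rw [hNdef, Matrix.conjTranspose_mul]
    rw [Matrix.IsHermitian, h1, Matrix.conjTranspose_eq_transpose_of_trivial A,
      Matrix.conjTranspose_eq_transpose_of_trivial (Aᵀ), Matrix.transpose_transpose, hNdef]
  have hMclass : ∀ (v : Fin p) (y : Fin p → ℝ), (∀ j, y j ≠ 0 → R v j) → y ≠ 0 →
      0 < y ⬝ᵥ (M *ᵥ y) := by
    intro v y hy hyne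
    rw [hformM y]
    refine (hSz v y hy).2 ?_
    intro h
    exact hyne (hAinj (by simpa using h))
  have hMbPD : Mb.PosDef :=
    bdm_posDef hRr (fun h => hRs h) (fun a b => hRt a b) hMH hMclass
  have hNclass : ∀ (v : Fin p) (y : Fin p → ℝ), (∀ j, y j ≠ 0 → R v j) → y ≠ 0 →
      0 < y ⬝ᵥ (Nmat *ᵥ y) := by
    intro v y hy hyne
    rw [hformN y]
    have hzne : A *ᵥ y ≠ 0 := fun h => hyne (hAinj (by simpa using h))
    refine lt_of_le_of_ne (Finset.sum_nonneg fun i _ => mul_self_nonneg _) ?_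
    intro h'
    exact hzne (dotProduct_self_eq_zero.mp h'.symm)
  have hNbPD : Nb.PosDef :=
    bdm_posDef hRr (fun h => hRs h) (fun a b => hRt a b) hNH hNclass
  have hQclass : ∀ (v : Fin p) (y : Fin p → ℝ), (∀ j, y j ≠ 0 → R v j) →
      0 ≤ y ⬝ᵥ ((M - κ • Nmat) *ᵥ y) := by
    intro v y hy
    have h1 := (hSz v y hy).1
    have hzz : 0 ≤ (A *ᵥ y) ⬝ᵥ (A *ᵥ y) := Finset.sum_nonneg fun i _ => mul_self_nonneg _
    have hexp : y ⬝ᵥ ((M - κ • Nmat) *ᵥ y) = y ⬝ᵥ (M *ᵥ y) - κ * (y ⬝ᵥ (Nmat *ᵥ y)) := by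
      rw [Matrix.sub_mulVec, dotProduct_sub, Matrix.smul_mulVec,
        dotProduct_smul, smul_eq_mul]
    rw [hexp, hformM, hformN]
    have hκv : κ * ((A *ᵥ y) ⬝ᵥ (A *ᵥ y)) ≤ κf v * ((A *ᵥ y) ⬝ᵥ (A *ᵥ y)) :=
      mul_le_mul_of_nonneg_right (hκle v) hzz
    linarith
  have hQform := bdm_form_nonneg hRr (fun h => hRs h) (fun a b => hRt a b) hQclass
  have hbdmQeq : bdm R (M - κ • Nmat) = Mb - κ • Nb := by
    rw [bdm_sub, bdm_smul]
  have hκNbH : (κ • Nb).IsHermitian := by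
    rw [Matrix.IsHermitian, Matrix.conjTranspose_smul, hNbPD.isHermitian.eq, star_trivial]
  have hEbPSD : (Mb - κ • Nb).PosSemidef := by
    refine Matrix.PosSemidef.of_dotProduct_mulVec_nonneg ?_ ?_
    · exact hMbPD.isHermitian.sub hκNbH
    · intro x
      rw [star_triv, ← hbdmQeq]
      exact hQform x
  have hκNbPSD : (κ • Nb).PosSemidef := by
    refine Matrix.PosSemidef.of_dotProduct_mulVec_nonneg ?_ ?_
    · exact hκNbH
    · intro x
      rw [star_triv, Matrix.smul_mulVec, dotProduct_smul, smul_eq_mul]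
      have h2 := hNbPD.posSemidef.dotProduct_mulVec_nonneg x
      rw [star_triv] at h2
      exact mul_nonneg hκ0.le h2
  have hdetMb : κ ^ p * Nb.det ≤ Mb.det := by
    have h := det_le_det_add hκNbPSD hEbPSD
    have key : κ • Nb + (Mb - κ • Nb) = Mb := by abel
    rw [key] at h
    calc κ ^ p * Nb.det = (κ • Nb).det := by rw [Matrix.det_smul, Fintype.card_fin]
      _ ≤ Mb.det := h
  have hNmatPD : Nmat.PosDef := by
    refine Matrix.PosDef.of_dotProduct_mulVec_pos hNH fun x hx => ?_
    rw [star_triv, hformN x]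
    have hzne : A *ᵥ x ≠ 0 := fun h => hx (hAinj (by simpa using h))
    refine lt_of_le_of_ne (Finset.sum_nonneg fun i _ => mul_self_nonneg _) ?_
    intro h'
    exact hzne (dotProduct_self_eq_zero.mp h'.symm)
  have hfischer : Nmat.det ≤ Nb.det := by
    have := fischer_aux p (Fin p) R (by rw [Fintype.card_fin]) hRr
      (fun i j h => hRs h) (fun i j k h1 h2 => hRt h1 h2) Nmat hNmatPD
    exact this
  have hdetNmat : Nmat.det = A.det ^ 2 := by
    rw [hNdef, Matrix.det_mul, Matrix.det_transpose, sq]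
  have hMbpos : 0 < Mb.det := hMbPD.det_pos
  have hprof := profile_ineq hOmPD hMbPD
  rw [Fintype.card_fin] at hprof
  have hll : loglik ((A⁻¹)ᵀ * Om * A⁻¹) S
      = -Real.log (Om.det * ((A.det)^2)⁻¹) - (Om⁻¹ * Mb).trace := by
    unfold loglik
    rw [hdetSig, hSiginv, htr1, htr2]
  have hlogOm : Real.log (Om.det * ((A.det)^2)⁻¹)
      = Real.log Om.det - Real.log (A.det^2) := by
    rw [Real.log_mul hOmPD.det_pos.ne' (inv_ne_zero hd2.ne'), Real.log_inv]
    ring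
  have hκppos : (0:ℝ) < κ ^ p := pow_pos hκ0 p
  have hMbge : κ ^ p * A.det ^ 2 ≤ Mb.det := by
    calc κ ^ p * A.det ^ 2 = κ ^ p * Nmat.det := by rw [hdetNmat]
      _ ≤ κ ^ p * Nb.det := mul_le_mul_of_nonneg_left hfischer hκppos.le
      _ ≤ Mb.det := hdetMb
  have hlogMb : (p:ℝ) * Real.log κ + Real.log (A.det^2) ≤ Real.log Mb.det := by
    have h1 : Real.log (κ^p * A.det^2) ≤ Real.log Mb.det :=
      Real.log_le_log (by positivity) hMbge
    rw [Real.log_mul (pow_ne_zero p hκ0.ne') hd2.ne', Real.log_pow] at h1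
    exact_mod_cast h1
  rw [hll, hlogOm, hCdef]
  linarith

end MainTheorem
end

section
/- Let G be the mixed graph on V={1,2,3} with directed edges D={(1,2),(2,3)} and bidirected edge set B={{2,3}}. Then PD(G) is exactly the set of positive definite 3×3 matrices Σ=(σ_{ij}) such that σ_{13}=0 whenever σ_{12}=0 (equivalently: σ_{12}=0 implies σ_{13}=0). -/
open Matrix MeasureTheory Filter

noncomputable section

lemma conjT_eq_transpose {n : Type*} (B : Matrix n n ℝ) : Bᴴ = Bᵀ := by
  ext i j; simp [conjTranspose_apply]

lemma posdef_conj {n : Type*} [Fintype n] [DecidableEq n]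
    {A B : Matrix n n ℝ} (hA : A.PosDef) (hB : IsUnit B) : (Bᵀ * A * B).PosDef := by
  refine Matrix.PosDef.of_dotProduct_mulVec_pos ?_ ?_
  · have hAt : Aᵀ = A := by rw [← conjT_eq_transpose]; exact hA.1
    rw [Matrix.IsHermitian, conjT_eq_transpose, transpose_mul, transpose_mul,
      transpose_transpose, hAt, Matrix.mul_assoc]
  · intro x hx
    have hBx : B *ᵥ x ≠ 0 := by
      intro h
      exact hx (Matrix.mulVec_injective_iff_isUnit.2 hB (by simpa using h))
    have := hA.dotProduct_mulVec_pos hBx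
    simpa [← Matrix.mulVec_mulVec, dotProduct_mulVec, Matrix.vecMul_transpose] using this

lemma NM_eq_one (a b : ℝ) :
    (!![1,-a,0;0,1,-b;0,0,1] : Matrix (Fin 3) (Fin 3) ℝ) * !![1,a,a*b;0,1,b;0,0,1] = 1 := by
  ext i j
  fin_cases i <;> fin_cases j <;>
    simp [Matrix.mul_apply, Fin.sum_univ_three, Matrix.one_apply, Matrix.vecHead,
      Matrix.vecTail]

lemma MN_eq_one (a b : ℝ) :
    (!![1,a,a*b;0,1,b;0,0,1] : Matrix (Fin 3) (Fin 3) ℝ) * !![1,-a,0;0,1,-b;0,0,1] = 1 := by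
  ext i j
  fin_cases i <;> fin_cases j <;>
    simp [Matrix.mul_apply, Fin.sum_univ_three, Matrix.one_apply, Matrix.vecHead,
      Matrix.vecTail]

lemma one_sub_lam (a b : ℝ) :
    (1 : Matrix (Fin 3) (Fin 3) ℝ) - !![0,a,0;0,0,b;0,0,0] = !![1,-a,0;0,1,-b;0,0,1] := by
  ext i j
  fin_cases i <;> fin_cases j <;> simp [Matrix.one_apply, Matrix.vecHead, Matrix.vecTail]

lemma isUnit_M (a b : ℝ) : IsUnit (!![1,a,a*b;0,1,b;0,0,1] : Matrix (Fin 3) (Fin 3) ℝ) :=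
  ⟨⟨_, _, MN_eq_one a b, NM_eq_one a b⟩, rfl⟩

lemma isUnit_N (a b : ℝ) : IsUnit (!![1,-a,0;0,1,-b;0,0,1] : Matrix (Fin 3) (Fin 3) ℝ) :=
  ⟨⟨_, _, NM_eq_one a b, MN_eq_one a b⟩, rfl⟩

lemma inv_N (a b : ℝ) :
    (!![1,-a,0;0,1,-b;0,0,1] : Matrix (Fin 3) (Fin 3) ℝ)⁻¹ = !![1,a,a*b;0,1,b;0,0,1] :=
  Matrix.inv_eq_right_inv (NM_eq_one a b)

/-- For the mixed graph on three nodes with directed edges `1 → 2`, `2 → 3` and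
bidirected edge `2 ↔ 3` (here encoded on `Fin 3` as `0 → 1`, `1 → 2`, `1 ↔ 2`), the set
`PD(G)` consists exactly of the positive definite `3 × 3` matrices `Σ` such that
`Σ₁₂ = 0` implies `Σ₁₃ = 0`. -/
theorem pdg_three_node_example :
    PDG ({((0 : Fin 3), (1 : Fin 3)), ((1 : Fin 3), (2 : Fin 3))} : Set (Fin 3 × Fin 3))
        (SimpleGraph.fromRel fun a b => a = (1 : Fin 3) ∧ b = (2 : Fin 3)) =
      {Sig : Matrix (Fin 3) (Fin 3) ℝ |
        Sig.PosDef ∧ (Sig 0 1 = 0 → Sig 0 2 = 0)} := by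
  ext Sig
  constructor
  · rintro ⟨Λ, ⟨hΛ, hΛu⟩, Ω, ⟨hΩpd, hΩz⟩, rfl⟩
    have hΛeq : Λ = !![0, Λ 0 1, 0; 0, 0, Λ 1 2; 0, 0, 0] := by
      ext i j
      fin_cases i <;> fin_cases j <;>
        simp [Matrix.vecHead, Matrix.vecTail] <;>
        exact hΛ _ _ (by simp [Prod.ext_iff])
    set a := Λ 0 1 with ha
    set b := Λ 1 2 with hb
    have hinv : (1 - Λ)⁻¹ = !![1,a,a*b;0,1,b;0,0,1] := by
      rw [hΛeq, one_sub_lam, inv_N]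
    have hΩ01 : Ω 0 1 = 0 := hΩz 0 1 (by decide) (by simp [SimpleGraph.fromRel_adj])
    have hΩ02 : Ω 0 2 = 0 := hΩz 0 2 (by decide) (by simp [SimpleGraph.fromRel_adj])
    have hΩ10 : Ω 1 0 = 0 := hΩz 1 0 (by decide) (by simp [SimpleGraph.fromRel_adj])
    have hΩ20 : Ω 2 0 = 0 := hΩz 2 0 (by decide) (by simp [SimpleGraph.fromRel_adj])
    rw [hinv]
    constructor
    · exact posdef_conj hΩpd (isUnit_M a b)
    · have h01 : ((!![1,a,a*b;0,1,b;0,0,1] : Matrix (Fin 3) (Fin 3) ℝ)ᵀ * Ω *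
          !![1,a,a*b;0,1,b;0,0,1]) 0 1 = Ω 0 0 * a := by
        simp [Matrix.mul_apply, Fin.sum_univ_three, Matrix.vecHead, Matrix.vecTail,
          hΩ01, hΩ02, hΩ10, hΩ20]
      have h02 : ((!![1,a,a*b;0,1,b;0,0,1] : Matrix (Fin 3) (Fin 3) ℝ)ᵀ * Ω *
          !![1,a,a*b;0,1,b;0,0,1]) 0 2 = b * (a * Ω 0 0) := by
        simp [Matrix.mul_apply, Fin.sum_univ_three, Matrix.vecHead, Matrix.vecTail,
          hΩ01, hΩ02, hΩ10, hΩ20]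
        ring
      intro h
      rw [h01] at h
      rw [h02, mul_comm a (Ω 0 0), h, mul_zero]
  · rintro ⟨hpd, himp⟩
    have hsym : ∀ i j, Sig j i = Sig i j := by
      intro i j
      have := hpd.1
      calc Sig j i = star (Sig j i) := (star_trivial _).symm
        _ = Sigᴴ i j := rfl
        _ = Sig i j := by rw [this]
    have h00 : 0 < Sig 0 0 := by
      have := hpd.dotProduct_mulVec_pos (x := Pi.single 0 1) (by
        intro h; simpa using congrFun h 0)
      simpa [Matrix.mulVec, dotProduct, Fin.sum_univ_three, Pi.single_apply] using this
    by_cases h : Sig 0 1 = 0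
    · refine ⟨0, ⟨fun i j _ => rfl, by simp⟩, Sig, ⟨hpd, ?_⟩, by simp⟩
      intro i j hne hadj
      fin_cases i <;> fin_cases j <;>
        first
        | exact absurd rfl hne
        | exact h
        | exact (hsym 0 1).trans h
        | exact himp h
        | exact (hsym 0 2).trans (himp h)
        | exact absurd (by simp [SimpleGraph.fromRel_adj]) hadj
    · set a : ℝ := Sig 0 1 / Sig 0 0 with ha
      set b : ℝ := Sig 0 2 / Sig 0 1 with hb
      refine ⟨!![0,a,0;0,0,b;0,0,0], ⟨?_, ?_⟩,
        (!![1,-a,0;0,1,-b;0,0,1] : Matrix (Fin 3) (Fin 3) ℝ)ᵀ * Sig *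
          !![1,-a,0;0,1,-b;0,0,1], ⟨⟨posdef_conj hpd (isUnit_N a b), ?_⟩, ?_⟩⟩
      · intro i j hij
        fin_cases i <;> fin_cases j <;>
          simp [Matrix.vecHead, Matrix.vecTail] <;>
          exact absurd (by simp [Prod.ext_iff]) hij
      · rw [one_sub_lam]
        exact isUnit_N a b
      · intro i j hne hadj
        have e01 : -(a * Sig 0 0) + Sig 0 1 = 0 := by
          rw [ha]; field_simp; ring
        have e02 : -(b * Sig 0 1) + Sig 0 2 = 0 := by
          rw [hb]; field_simp; ring
        fin_cases i <;> fin_cases j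
        · exact absurd rfl hne
        · simp [Matrix.mul_apply, Fin.sum_univ_three, Matrix.vecHead, Matrix.vecTail,
            hsym 0 1, hsym 0 2, hsym 1 2]
          linarith [e01, e02]
        · simp [Matrix.mul_apply, Fin.sum_univ_three, Matrix.vecHead, Matrix.vecTail,
            hsym 0 1, hsym 0 2, hsym 1 2]
          linarith [e01, e02]
        · simp [Matrix.mul_apply, Fin.sum_univ_three, Matrix.vecHead, Matrix.vecTail,
            hsym 0 1, hsym 0 2, hsym 1 2]
          linarith [e01, e02]
        · exact absurd rfl hne
        · exact absurd (by simp [SimpleGraph.fromRel_adj]) hadj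
        · simp [Matrix.mul_apply, Fin.sum_univ_three, Matrix.vecHead, Matrix.vecTail,
            hsym 0 1, hsym 0 2, hsym 1 2]
          linarith [e01, e02]
        · exact absurd (by simp [SimpleGraph.fromRel_adj]) hadj
        · exact absurd rfl hne
      · rw [one_sub_lam, inv_N]
        have : (!![1,a,a*b;0,1,b;0,0,1] : Matrix (Fin 3) (Fin 3) ℝ)ᵀ *
            ((!![1,-a,0;0,1,-b;0,0,1] : Matrix (Fin 3) (Fin 3) ℝ)ᵀ * Sig *
              !![1,-a,0;0,1,-b;0,0,1]) * !![1,a,a*b;0,1,b;0,0,1] =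
            ((!![1,-a,0;0,1,-b;0,0,1] : Matrix (Fin 3) (Fin 3) ℝ) *
              !![1,a,a*b;0,1,b;0,0,1])ᵀ * Sig *
            ((!![1,-a,0;0,1,-b;0,0,1] : Matrix (Fin 3) (Fin 3) ℝ) *
              !![1,a,a*b;0,1,b;0,0,1]) := by
          rw [transpose_mul]
          noncomm_ring
        rw [this, NM_eq_one]
        simp

end
end

section
/- Let p ≥ 3, let C_p be the directed p-cycle on V={1,...,p} with edge set D={(i,i+1): i=1,...,p−1} ∪ {(p,1)}, and let C̄_p be the undirected p-cycle with edges {i,i+1} taken modulo p. Then the inclusion PD(C_p) ⊆ PD(C̄_p)^{-1} is strict: there exists a positive definite p×p matrix Σ with Σ^{-1} ∈ PD(C̄_p) such that Σ ∉ PD(C_p). -/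
open Matrix MeasureTheory Filter

noncomputable section

namespace CycAux

open Finset
open Fin.NatCast Fin.CommRing

variable (p : ℕ) [NeZero p]

def sg : Fin p → ℝ := fun i => if i = -1 then (-1 : ℝ)^(p+1) else 1

def dl : ℝ := 1 / (p : ℝ)^2

def aa : Fin p → ℝ := fun i => sg p i / 2 + if i = 0 then dl p else 0

def KK : Matrix (Fin p) (Fin p) ℝ := Matrix.of fun i j =>
  (if i = j then 1 else 0) + (if j = i + 1 then aa p i else 0) + (if i = j + 1 then aa p j else 0)

variable {p}

lemma one_ne_zero' (hp : 3 ≤ p) : (1 : Fin p) ≠ 0 := by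
  have : ((1 : ℕ) : Fin p) ≠ 0 := by
    rw [Ne, Fin.natCast_eq_zero]
    intro h
    have := Nat.le_of_dvd one_pos h
    omega
  simpa using this

lemma two_ne_zero' (hp : 3 ≤ p) : (2 : Fin p) ≠ 0 := by
  have : ((2 : ℕ) : Fin p) ≠ 0 := by
    rw [Ne, Fin.natCast_eq_zero]
    intro h
    have := Nat.le_of_dvd two_pos h
    omega
  simpa using this

lemma zero_ne_neg_one (hp : 3 ≤ p) : (0 : Fin p) ≠ -1 := by
  intro h
  exact one_ne_zero' hp (by rw [← neg_eq_zero, ← h])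

lemma sg_sq (i : Fin p) : sg p i * sg p i = 1 := by
  unfold sg
  split
  · rw [← pow_add, ← two_mul, pow_mul]
    norm_num
  · norm_num

lemma abs_sg (i : Fin p) : |sg p i| = 1 := by
  unfold sg
  split
  · rw [abs_pow, abs_neg, abs_one, one_pow]
  · exact abs_one

lemma prod_sg : ∏ i : Fin p, sg p i = (-1 : ℝ)^(p+1) := by
  unfold sg
  rw [Finset.prod_ite_eq' Finset.univ (-1 : Fin p) (fun _ => (-1:ℝ)^(p+1))]
  simp

end CycAux

namespace CycAux

variable {p : ℕ} [NeZero p]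
open Fin.NatCast Fin.CommRing

/-- The signed telescoping identity around the cycle. -/
lemma telescope (hp : 3 ≤ p) (x : Fin p → ℝ) (k : Fin p) (m : ℕ) :
    ((-1:ℝ)^m * ∏ u ∈ Finset.range m, sg p (k + (u : Fin p))) * x (k + (m : Fin p))
      = x k + ∑ t ∈ Finset.range m, ((-1:ℝ)^(t+1) * ∏ u ∈ Finset.range (t+1), sg p (k + (u : Fin p)))
          * (x (k + (t : Fin p) + 1) + sg p (k + (t : Fin p)) * x (k + (t : Fin p))) := by
  induction m with
  | zero => simp
  | succ m ih =>
    rw [Finset.sum_range_succ, ← add_assoc, ← ih, Finset.prod_range_succ, pow_succ,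
      show ((m+1 : ℕ) : Fin p) = (m : Fin p) + 1 from by push_cast; ring,
      ← add_assoc k (m : Fin p) 1]
    have hs := sg_sq (k + (m : Fin p))
    set P := ∏ u ∈ Finset.range m, sg p (k + (u : Fin p)) with hP
    set S := sg p (k + (m : Fin p)) with hS
    linear_combination ((-1:ℝ)^m * P * x (k + (m : Fin p))) * hs

lemma two_abs_le (hp : 3 ≤ p) (x : Fin p → ℝ) (k : Fin p) :
    2 * |x k| ≤ ∑ i : Fin p, |x (i + 1) + sg p i * x i| := by
  have h := telescope hp x k p
  have hcast : ((p : ℕ) : Fin p) = 0 := Fin.natCast_self p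
  rw [hcast, add_zero] at h
  have hprod : ∏ u ∈ Finset.range p, sg p (k + (u : Fin p)) = (-1:ℝ)^(p+1) := by
    rw [← Fin.prod_univ_eq_prod_range (fun u => sg p (k + (u : Fin p))) p]
    simp only [Fin.cast_val_eq_self]
    rw [show (∏ i : Fin p, sg p (k + i)) = ∏ i : Fin p, sg p i from
      Fintype.prod_equiv (Equiv.addLeft k) _ _ (fun i => rfl)]
    exact prod_sg
  rw [hprod, ← pow_add] at h
  have hodd : ((-1:ℝ))^(p + (p+1)) = -1 := by
    have : Odd (p + (p+1)) := ⟨p, by ring⟩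
    exact this.neg_one_pow
  rw [hodd, neg_one_mul] at h
  -- h : -x k = x k + ∑ ...
  have h2 : (2 : ℝ) * |x k| = |∑ t ∈ Finset.range p, ((-1:ℝ)^(t+1) * ∏ u ∈ Finset.range (t+1), sg p (k + (u : Fin p)))
          * (x (k + (t : Fin p) + 1) + sg p (k + (t : Fin p)) * x (k + (t : Fin p)))| := by
    rw [show (∑ t ∈ Finset.range p, ((-1:ℝ)^(t+1) * ∏ u ∈ Finset.range (t+1), sg p (k + (u : Fin p)))
          * (x (k + (t : Fin p) + 1) + sg p (k + (t : Fin p)) * x (k + (t : Fin p)))) = -(2 * x k) from by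
      linarith [h]]
    rw [abs_neg, abs_mul]
    norm_num
  rw [h2]
  refine le_trans (Finset.abs_sum_le_sum_abs _ _) ?_
  have hle : ∀ t ∈ Finset.range p, |((-1:ℝ)^(t+1) * ∏ u ∈ Finset.range (t+1), sg p (k + (u : Fin p)))
          * (x (k + (t : Fin p) + 1) + sg p (k + (t : Fin p)) * x (k + (t : Fin p)))|
        = |x (k + (t : Fin p) + 1) + sg p (k + (t : Fin p)) * x (k + (t : Fin p))| := by
    intro t _
    rw [abs_mul, abs_mul, abs_pow, abs_neg, abs_one, one_pow, Finset.abs_prod]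
    simp [abs_sg]
  rw [Finset.sum_congr rfl hle,
    ← Fin.sum_univ_eq_sum_range (fun t => |x (k + (t : Fin p) + 1) + sg p (k + (t : Fin p)) * x (k + (t : Fin p))|) p]
  simp only [Fin.cast_val_eq_self]
  rw [show (∑ i : Fin p, |x (k + i + 1) + sg p (k + i) * x (k + i)|)
      = ∑ i : Fin p, |x (i + 1) + sg p i * x i| from
    Fintype.sum_equiv (Equiv.addLeft k) _ _ (fun i => rfl)]

lemma mulVec_KK (hp : 3 ≤ p) (x : Fin p → ℝ) (i : Fin p) :
    (KK p *ᵥ x) i = x i + aa p i * x (i+1) + aa p (i-1) * x (i-1) := by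
  have h1 : ∑ j : Fin p, (if i = j then (1:ℝ) else 0) * x j = x i := by
    simp
  have h2 : ∑ j : Fin p, (if j = i + 1 then aa p i else 0) * x j = aa p i * x (i+1) := by
    simp [ite_mul]
  have h3 : ∑ j : Fin p, (if i = j + 1 then aa p j else 0) * x j = aa p (i-1) * x (i-1) := by
    have : ∀ j : Fin p, (i = j + 1) ↔ (j = i - 1) := by
      intro j
      constructor
      · intro h; rw [h]; ring
      · intro h; rw [h]; ring
    rw [Finset.sum_congr rfl (fun j _ => by rw [if_congr (this j) rfl rfl])]
    simp
  simp only [mulVec, dotProduct, KK, Matrix.of_apply]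
  rw [Finset.sum_congr rfl (fun j _ => add_mul (_ + _) _ (x j)),
      Finset.sum_congr rfl (fun j _ => by rw [add_mul ((if i = j then (1:ℝ) else 0)) _ (x j)]),
      Finset.sum_add_distrib, Finset.sum_add_distrib, h1, h2, h3]

lemma quad (hp : 3 ≤ p) (x : Fin p → ℝ) :
    x ⬝ᵥ (KK p *ᵥ x) = ∑ i : Fin p, x i ^ 2 + 2 * ∑ i : Fin p, aa p i * (x i * x (i+1)) := by
  have : x ⬝ᵥ (KK p *ᵥ x)
      = ∑ i : Fin p, (x i * x i + x i * (aa p i * x (i+1)) + x i * (aa p (i-1) * x (i-1))) := by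
    unfold dotProduct
    refine Finset.sum_congr rfl fun i _ => ?_
    rw [mulVec_KK hp x i]; ring
  rw [this, Finset.sum_add_distrib, Finset.sum_add_distrib]
  have h3 : ∑ i : Fin p, x i * (aa p (i-1) * x (i-1)) = ∑ i : Fin p, x (i+1) * (aa p i * x i) := by
    refine (Fintype.sum_equiv (Equiv.addRight (1 : Fin p)) _ _ fun i => ?_).symm
    simp [add_sub_cancel_right]
  rw [h3, Finset.mul_sum,
    show ∑ i : Fin p, x i * x i = ∑ i : Fin p, x i ^ 2 from
      Finset.sum_congr rfl fun i _ => (sq (x i)).symm,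
    add_assoc, ← Finset.sum_add_distrib]
  congr 1
  exact Finset.sum_congr rfl fun i _ => by ring

lemma quad' (hp : 3 ≤ p) (x : Fin p → ℝ) :
    x ⬝ᵥ (KK p *ᵥ x)
      = (1/2) * ∑ i : Fin p, (x (i+1) + sg p i * x i)^2 + 2 * dl p * (x 0 * x 1) := by
  rw [quad hp x]
  have hy : ∑ i : Fin p, (x (i+1) + sg p i * x i)^2
      = 2 * ∑ i : Fin p, x i ^ 2 + 2 * ∑ i : Fin p, sg p i * (x i * x (i+1)) := by
    have step : ∀ i : Fin p, (x (i+1) + sg p i * x i)^2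
        = x (i+1)^2 + x i ^2 + 2 * (sg p i * (x i * x (i+1))) := by
      intro i
      have := sg_sq (p := p) i
      nlinarith [this]
    rw [Finset.sum_congr rfl fun i _ => step i, Finset.sum_add_distrib, Finset.sum_add_distrib]
    have hsh : ∑ i : Fin p, x (i+1)^2 = ∑ i : Fin p, x i ^2 :=
      Fintype.sum_equiv (Equiv.addRight (1 : Fin p)) _ _ fun i => rfl
    rw [hsh, ← Finset.mul_sum]
    ring
  have ha : ∑ i : Fin p, aa p i * (x i * x (i+1))
      = (1/2) * ∑ i : Fin p, sg p i * (x i * x (i+1)) + dl p * (x 0 * x 1) := by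
    unfold aa
    have hterm : ∀ i : Fin p, (sg p i / 2 + if i = 0 then dl p else 0) * (x i * x (i+1))
        = sg p i * (x i * x (i+1)) / 2 + (if i = 0 then dl p * (x i * x (i+1)) else 0) := by
      intro i; split <;> ring
    rw [Finset.sum_congr rfl fun i _ => hterm i, Finset.sum_add_distrib,
      Finset.sum_ite_eq' Finset.univ (0:Fin p) (fun i => dl p * (x i * x (i+1)))]
    simp only [Finset.mem_univ, if_true, zero_add]
    rw [← Finset.sum_div]
    linarith
  rw [hy, ha]
  ring

lemma self_ne_add_one (hp : 3 ≤ p) (i : Fin p) : i ≠ i + 1 := fun h =>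
  one_ne_zero' hp (left_eq_add.mp h)

lemma self_ne_add_two (hp : 3 ≤ p) (i : Fin p) : i ≠ i + 1 + 1 := fun h => by
  rw [add_assoc] at h
  have h2 : (1 : Fin p) + 1 = 0 := left_eq_add.mp h
  exact two_ne_zero' hp (by rw [← h2]; norm_num)

lemma KK_symm (hp : 3 ≤ p) : (KK p).IsHermitian := by
  show (KK p)ᴴ = KK p
  ext i j
  simp only [conjTranspose_apply, star_trivial, KK, Matrix.of_apply]
  by_cases h : i = j
  · subst h; ring
  · rw [if_neg h, if_neg (fun hh : j = i => h hh.symm)]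
    ring

lemma KK_posDef (hp : 3 ≤ p) : (KK p).PosDef := by
  refine Matrix.PosDef.of_dotProduct_mulVec_pos (KK_symm hp) fun x hx => ?_
  have hsx : star x = x := funext fun i => star_trivial (x i)
  rw [hsx, quad' hp x]
  set y : Fin p → ℝ := fun i => x (i+1) + sg p i * x i with hy
  set S := ∑ i : Fin p, |y i| with hSdef
  have hS0 : 0 ≤ S := Finset.sum_nonneg fun i _ => abs_nonneg _
  have hx2 : ∀ k, x k ^ 2 ≤ S ^ 2 / 4 := by
    intro k
    have h := two_abs_le hp x k
    nlinarith [abs_nonneg (x k), sq_abs (x k)]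
  have hppos : (0:ℝ) < (p:ℝ) := by
    have : 0 < p := by omega
    exact_mod_cast this
  have hsum : ∑ k : Fin p, x k ^ 2 ≤ (p:ℝ) * (S ^ 2 / 4) := by
    calc ∑ k : Fin p, x k ^ 2 ≤ ∑ _k : Fin p, S ^ 2 / 4 :=
          Finset.sum_le_sum fun k _ => hx2 k
      _ = (p:ℝ) * (S ^ 2 / 4) := by
          rw [Finset.sum_const, Finset.card_univ, Fintype.card_fin, nsmul_eq_mul]
  have hcs : S ^ 2 ≤ (p:ℝ) * ∑ i : Fin p, y i ^ 2 := by
    have h := sq_sum_le_card_mul_sum_sq (s := (Finset.univ : Finset (Fin p)))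
      (f := fun i => |y i|)
    simpa [sq_abs, Finset.card_univ, Fintype.card_fin] using h
  have hy2 : (4 / (p:ℝ)^2) * ∑ k : Fin p, x k ^ 2 ≤ ∑ i : Fin p, y i ^ 2 := by
    rw [div_mul_eq_mul_div, div_le_iff₀ (by positivity)]
    nlinarith [hsum, hcs]
  have hx01 : x 0 ^ 2 + x 1 ^ 2 ≤ ∑ k : Fin p, x k ^ 2 := by
    have h01 : (0 : Fin p) ≠ 1 := fun h => one_ne_zero' hp h.symm
    rw [show x 0 ^ 2 + x 1 ^ 2 = ∑ k ∈ ({0, 1} : Finset (Fin p)), x k ^ 2 from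
      by rw [Finset.sum_pair h01]]
    exact Finset.sum_le_sum_of_subset_of_nonneg (Finset.subset_univ _)
      (fun k _ _ => sq_nonneg _)
  have hpos : 0 < ∑ k : Fin p, x k ^ 2 := by
    obtain ⟨k, hk⟩ := Function.ne_iff.mp hx
    exact Finset.sum_pos' (fun i _ => sq_nonneg _)
      ⟨k, Finset.mem_univ k, sq_pos_of_ne_zero hk⟩
  have hdl : dl p = 1 / (p:ℝ)^2 := rfl
  have hp2 : (0:ℝ) < (p:ℝ)^2 := by positivity
  rw [hdl]
  have hinv : (0:ℝ) < 1/(p:ℝ)^2 := by positivity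
  have h3 : 4 * ∑ k : Fin p, x k ^ 2 ≤ (∑ i : Fin p, y i ^ 2) * (p:ℝ)^2 := by
    rw [div_mul_eq_mul_div, div_le_iff₀ hp2] at hy2
    linarith
  have e1 : (1/(p:ℝ)^2) * (-(∑ k : Fin p, x k ^ 2)) ≤ 2 * (1/(p:ℝ)^2) * (x 0 * x 1) := by
    have hh : -(∑ k : Fin p, x k ^ 2) ≤ 2 * (x 0 * x 1) := by
      nlinarith [sq_nonneg (x 0 + x 1), hx01]
    calc (1/(p:ℝ)^2) * (-(∑ k : Fin p, x k ^ 2)) ≤ (1/(p:ℝ)^2) * (2*(x 0 * x 1)) :=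
        mul_le_mul_of_nonneg_left hh hinv.le
      _ = 2 * (1/(p:ℝ)^2) * (x 0 * x 1) := by ring
  have e2 : (2/(p:ℝ)^2) * ∑ k : Fin p, x k ^ 2 ≤ 1/2 * ∑ i : Fin p, y i ^ 2 := by
    rw [div_mul_eq_mul_div, div_le_iff₀ hp2]
    linarith
  have he : (0:ℝ) < (1/(p:ℝ)^2) * ∑ k : Fin p, x k ^ 2 := by positivity
  have e4 : (2/(p:ℝ)^2) * ∑ k : Fin p, x k ^ 2
      = 2 * ((1/(p:ℝ)^2) * ∑ k : Fin p, x k ^ 2) := by ring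
  have e5 : (1/(p:ℝ)^2) * (-(∑ k : Fin p, x k ^ 2))
      = -((1/(p:ℝ)^2) * ∑ k : Fin p, x k ^ 2) := by ring
  linarith

lemma KK_diag (hp : 3 ≤ p) (i : Fin p) : KK p i i = 1 := by
  simp only [KK, Matrix.of_apply, if_pos rfl, if_neg (self_ne_add_one hp i)]
  norm_num

lemma KK_off (hp : 3 ≤ p) (i : Fin p) : KK p i (i+1) = aa p i := by
  simp only [KK, Matrix.of_apply, if_neg (self_ne_add_one hp i),
    if_neg (self_ne_add_two hp i), if_pos rfl]
  norm_num

lemma KK_zero (i j : Fin p) (hij : i ≠ j) (h1 : j ≠ i + 1) (h2 : i ≠ j + 1) :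
    KK p i j = 0 := by
  simp only [KK, Matrix.of_apply, if_neg hij, if_neg h1, if_neg h2]
  norm_num

lemma not_in_model (hp : 3 ≤ p) :
    (KK p)⁻¹ ∉ PDG {x : Fin p × Fin p | x.2 = x.1 + 1} (⊥ : SimpleGraph (Fin p)) := by
  rintro ⟨Λ, ⟨hsupp, hunit⟩, Ω, ⟨hΩpd, hΩoff⟩, heq⟩
  set A := 1 - Λ with hA
  have hΩdiag : Ω = Matrix.diagonal (fun i => Ω i i) := by
    ext i j
    by_cases h : i = j
    · subst h; simp
    · rw [Matrix.diagonal_apply_ne _ h]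
      exact hΩoff i j h (by simp)
  have hwpos : ∀ i, 0 < Ω i i := by
    rw [hΩdiag] at hΩpd
    exact Matrix.posDef_diagonal_iff.mp hΩpd
  set w : Fin p → ℝ := fun i => (Ω i i)⁻¹ with hw
  have hwpos' : ∀ i, 0 < w i := fun i => inv_pos.mpr (hwpos i)
  have hAdet : IsUnit A.det := (Matrix.isUnit_iff_isUnit_det A).mp hunit
  have hKdet : IsUnit (KK p).det := (KK_posDef hp).det_pos.ne'.isUnit
  have hΩinv : Ω⁻¹ = Matrix.diagonal w := by
    refine Matrix.inv_eq_left_inv ?_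
    rw [hΩdiag, Matrix.diagonal_mul_diagonal,
      show (fun i => w i * Ω i i) = fun _ => (1:ℝ) from
        funext fun i => inv_mul_cancel₀ (hwpos i).ne']
    exact Matrix.diagonal_one
  have hKK : KK p = A * Matrix.diagonal w * Aᵀ := by
    have h1 : ((KK p)⁻¹)⁻¹ = KK p := Matrix.nonsing_inv_nonsing_inv _ hKdet
    rw [heq, Matrix.mul_inv_rev, Matrix.mul_inv_rev,
      Matrix.nonsing_inv_nonsing_inv _ hAdet, hΩinv,
      ← Matrix.transpose_nonsing_inv, Matrix.nonsing_inv_nonsing_inv _ hAdet] at h1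
    rw [← h1, mul_assoc]
  have hAdiag : ∀ i, A i i = 1 := by
    intro i
    have : Λ i i = 0 := hsupp i i (fun h => self_ne_add_one hp i h)
    simp [hA, Matrix.sub_apply, this]
  have hAoff : ∀ i j, j ≠ i → j ≠ i + 1 → A i j = 0 := by
    intro i j hji hj1
    have : Λ i j = 0 := hsupp i j (fun h => hj1 h)
    simp [hA, Matrix.sub_apply, this, Matrix.one_apply_ne (fun h : i = j => hji h.symm)]
  have hentry : ∀ i j, (A * Matrix.diagonal w * Aᵀ) i j = ∑ k, A i k * w k * A j k := by
    intro i j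
    rw [Matrix.mul_apply]
    exact Finset.sum_congr rfl fun k _ => by
      rw [Matrix.mul_diagonal, Matrix.transpose_apply]
  have hsum2 : ∀ (f : Fin p → ℝ) (i : Fin p), (∀ k, k ≠ i → k ≠ i + 1 → f k = 0) →
      ∑ k, f k = f i + f (i + 1) := by
    intro f i hf
    rw [← Finset.sum_subset (Finset.subset_univ ({i, i+1} : Finset (Fin p)))
      (fun k _ hk => hf k
        (fun h => hk (by simp [h]))
        (fun h => hk (by simp [h])))]
    exact Finset.sum_pair (self_ne_add_one hp i)
  have hdiagEq : ∀ i, (1:ℝ) = w i + (A i (i+1))^2 * w (i+1) := by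
    intro i
    have e : (1:ℝ) = (A * Matrix.diagonal w * Aᵀ) i i := by
      rw [← hKK]; exact (KK_diag hp i).symm
    rw [hentry, hsum2 (fun k => A i k * w k * A i k) i
      (fun k h1 h2 => by
        show A i k * w k * A i k = 0
        rw [hAoff i k (fun h => h1 h) (fun h => h2 h)]; ring)] at e
    rw [hAdiag i] at e
    rw [e]; ring
  have hoffEq : ∀ i, aa p i = A i (i+1) * w (i+1) := by
    intro i
    have e : aa p i = (A * Matrix.diagonal w * Aᵀ) i (i+1) := by
      rw [← hKK]; exact (KK_off hp i).symm
    rw [hentry, hsum2 (fun k => A i k * w k * A (i+1) k) i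
      (fun k h1 h2 => by
        show A i k * w k * A (i+1) k = 0
        rw [hAoff i k (fun h => h1 h) (fun h => h2 h)]; ring)] at e
    rw [hAdiag (i+1), hAoff (i+1) i (self_ne_add_one hp i)
      (fun h => self_ne_add_two hp i h)] at e
    rw [e]; ring
  have key : ∀ i : Fin p, 4 * (aa p i)^2 * (w i / w (i+1)) ≤ 1 := by
    intro i
    have h1 := hdiagEq i
    have h2 := hoffEq i
    have hpos1 := hwpos' i
    have hpos2 := hwpos' (i+1)
    have hq : 4 * (aa p i)^2 * (w i / w (i+1)) = 4 * (A i (i+1))^2 * w (i+1) * w i := by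
      rw [h2]
      field_simp
    rw [hq]
    nlinarith [sq_nonneg (w i - (A i (i+1))^2 * w (i+1)), h1]
  have hprod1 : ∏ i : Fin p, (4 * (aa p i)^2 * (w i / w (i+1))) ≤ 1 :=
    Finset.prod_le_one
      (fun i _ => mul_nonneg (by positivity)
        (div_nonneg (hwpos' i).le (hwpos' (i+1)).le))
      (fun i _ => key i)
  have htel : ∏ i : Fin p, (w i / w (i+1)) = 1 := by
    rw [Finset.prod_div_distrib,
      show (∏ i : Fin p, w (i+1)) = ∏ i : Fin p, w i from
        Fintype.prod_equiv (Equiv.addRight (1 : Fin p)) _ _ fun i => rfl]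
    exact div_self (Finset.prod_ne_zero_iff.mpr fun i _ => (hwpos' i).ne')
  have hprod2 : ∏ i : Fin p, (4 * (aa p i)^2) = (1 + 2 * dl p)^2 := by
    have hterm : ∀ i : Fin p, 4 * (aa p i)^2 = if i = 0 then (1 + 2 * dl p)^2 else 1 := by
      intro i
      unfold aa sg
      by_cases h : i = 0
      · subst h
        rw [if_pos rfl, if_neg (zero_ne_neg_one hp), if_pos rfl]
        ring
      · rw [if_neg h, if_neg h]
        by_cases h2 : i = -1
        · rw [if_pos h2]
          have hsq : ((-1:ℝ)^(p+1))^2 = 1 := by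
            rw [← pow_mul, mul_comm, pow_mul, neg_one_sq, one_pow]
          linear_combination hsq
        · rw [if_neg h2]
          norm_num
    rw [Finset.prod_congr rfl fun i _ => hterm i,
      Finset.prod_ite_eq' Finset.univ (0 : Fin p) (fun _ => (1 + 2 * dl p)^2)]
    simp
  rw [Finset.prod_mul_distrib, hprod2, htel, mul_one] at hprod1
  have hdlpos : 0 < dl p := by
    have : (0:ℝ) < (p:ℝ) := by exact_mod_cast (by omega : 0 < p)
    unfold dl
    positivity
  nlinarith [hprod1, hdlpos]

end CycAux

/-- The inclusion `PD(C_p) ⊆ PD(C̄_p)⁻¹` is strict:  there is a positive definite matrix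
`Σ` whose inverse is supported over the undirected `p`-cycle (edges `{i, i+1}` mod `p`)
but which does not lie in `PD(C_p)` for the directed `p`-cycle. -/
theorem directed_cycle_strict_inclusion (p : ℕ) [NeZero p] (hp : 3 ≤ p) :
    ∃ Sig : Matrix (Fin p) (Fin p) ℝ, Sig.PosDef ∧
      Sig⁻¹.PosDef ∧
      (∀ i j : Fin p, i ≠ j → j ≠ i + 1 → i ≠ j + 1 → Sig⁻¹ i j = 0) ∧
      Sig ∉ PDG {x : Fin p × Fin p | x.2 = x.1 + 1} (⊥ : SimpleGraph (Fin p)) := by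
  have hpd := CycAux.KK_posDef (p := p) hp
  have hinv : ((CycAux.KK p)⁻¹)⁻¹ = CycAux.KK p :=
    Matrix.nonsing_inv_nonsing_inv _ hpd.det_pos.ne'.isUnit
  refine ⟨(CycAux.KK p)⁻¹, hpd.inv, ?_, ?_, CycAux.not_in_model hp⟩
  · rw [hinv]; exact hpd
  · intro i j hij h1 h2
    rw [hinv]
    exact CycAux.KK_zero i j hij h1 h2

end
end

section
/- Let S be a positive definite p×p real matrix. Then for every positive definite p×p matrix Σ, ℓ(Σ|S) = −log det Σ − trace(Σ^{-1} S) ≤ −log det S − p, with equality if and only if Σ = S. Conversely, if S is positive semidefinite but singular, then Σ ↦ ℓ(Σ|S) is unbounded above on the cone of positive definite p×p matrices. -/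
open Matrix MeasureTheory Filter

noncomputable section

variable {n : Type*} [Fintype n] [DecidableEq n]

lemma myPosDef_conj {A B : Matrix n n ℝ} (hA : A.PosDef) (hB : IsUnit B.det) :
    (Bᴴ * A * B).PosDef := by
  refine Matrix.PosDef.of_dotProduct_mulVec_pos (isHermitian_conjTranspose_mul_mul B hA.1) fun x hx => ?_
  have hBx : B *ᵥ x ≠ 0 := by
    intro h
    exact hx (by simpa using (Matrix.mulVec_injective_iff_isUnit.mpr
      ((Matrix.isUnit_iff_isUnit_det B).mpr hB)) (h.trans (Matrix.mulVec_zero B).symm))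
  have := hA.dotProduct_mulVec_pos hBx
  simpa [star_mulVec, dotProduct_mulVec, ← vecMul_vecMul, vecMul_transpose, Matrix.mul_assoc] using this

lemma myTrace {M : Matrix n n ℝ} (hM : M.IsHermitian) :
    M.trace = ∑ i, hM.eigenvalues i := by
  conv_lhs => rw [hM.spectral_theorem, Unitary.conjStarAlgAut_apply]
  rw [trace_mul_cycle]
  rw [(Matrix.mem_unitaryGroup_iff').mp (hM.eigenvectorUnitary).2]
  simp [Matrix.trace_diagonal]

lemma myKey {M : Matrix n n ℝ} (hM : M.PosDef) :
    Real.log M.det ≤ M.trace - Fintype.card n ∧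
    (Real.log M.det = M.trace - Fintype.card n ↔ M = 1) := by
  have hpos := hM.eigenvalues_pos
  have hdet : M.det = ∏ i, hM.1.eigenvalues i := by
    simpa using hM.1.det_eq_prod_eigenvalues
  have hlog : Real.log M.det = ∑ i, Real.log (hM.1.eigenvalues i) := by
    rw [hdet, Real.log_prod]
    exact fun i _ => (hpos i).ne'
  have htr : M.trace - Fintype.card n = ∑ i, (hM.1.eigenvalues i - 1) := by
    rw [myTrace hM.1, Finset.sum_sub_distrib]
    simp
  have hterm : ∀ i ∈ Finset.univ, Real.log (hM.1.eigenvalues i) ≤ hM.1.eigenvalues i - 1 :=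
    fun i _ => Real.log_le_sub_one_of_pos (hpos i)
  constructor
  · rw [hlog, htr]; exact Finset.sum_le_sum hterm
  constructor
  · intro heq
    rw [hlog, htr] at heq
    have hall := (Finset.sum_eq_sum_iff_of_le hterm).mp heq
    have hone : ∀ i, hM.1.eigenvalues i = 1 := by
      intro i
      by_contra hne
      exact absurd (hall i (Finset.mem_univ i))
        (Real.log_lt_sub_one_of_pos (hpos i) hne).ne
    conv_lhs => rw [hM.1.spectral_theorem, Unitary.conjStarAlgAut_apply]
    have : Matrix.diagonal (RCLike.ofReal ∘ hM.1.eigenvalues) = (1 : Matrix n n ℝ) := by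
      have h9 : (RCLike.ofReal ∘ hM.1.eigenvalues : n → ℝ) = fun _ => 1 :=
        funext fun i => by simp [hone i]
      rw [h9, Matrix.diagonal_one]
    rw [this, mul_one]
    exact (Matrix.mem_unitaryGroup_iff).mp (hM.1.eigenvectorUnitary).2
  · rintro rfl
    simp [Matrix.trace_one]

open scoped MatrixOrder in
lemma part1 {S Sig : Matrix n n ℝ} (hS : S.PosDef) (hSig : Sig.PosDef) :
    (-Real.log Sig.det - (Sig⁻¹ * S).trace ≤ -Real.log S.det - Fintype.card n) ∧
    (-Real.log Sig.det - (Sig⁻¹ * S).trace = -Real.log S.det - Fintype.card n ↔ Sig = S) := by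
  set R := CFC.sqrt S with hRdef
  have hR : R.PosSemidef := (CFC.sqrt_nonneg S).posSemidef
  have hRR : R * R = S := CFC.sqrt_mul_sqrt_self S hS.posSemidef.nonneg
  have hdetR : R.det * R.det = S.det := by rw [← det_mul, hRR]
  have hSdet : 0 < S.det := hS.det_pos
  have hdetRne : R.det ≠ 0 := fun h => by simp [h] at hdetR; exact hSdet.ne' hdetR.symm
  have hRH : Rᴴ = R := hR.1
  set M := R * Sig⁻¹ * R with hMdef
  have hMpd : M.PosDef := by
    have := myPosDef_conj hSig.inv (isUnit_iff_ne_zero.mpr hdetRne)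
    rwa [hRH] at this
  have htrM : M.trace = (Sig⁻¹ * S).trace := by
    rw [hMdef, trace_mul_comm, ← Matrix.mul_assoc, hRR, trace_mul_comm]
  have hSigdet : 0 < Sig.det := hSig.det_pos
  have hdetM : M.det = S.det * Sig.det⁻¹ := by
    rw [hMdef, det_mul, det_mul, det_nonsing_inv, Ring.inverse_eq_inv']
    rw [mul_comm R.det _, mul_assoc, hdetR, mul_comm]
  have hlogM : Real.log M.det = Real.log S.det - Real.log Sig.det := by
    rw [hdetM, Real.log_mul hSdet.ne' (inv_ne_zero hSigdet.ne'), Real.log_inv]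
    ring
  obtain ⟨hle, hiff⟩ := myKey hMpd
  have hrw : -Real.log Sig.det - (Sig⁻¹ * S).trace
      = (Real.log M.det - (M.trace - Fintype.card n)) - Real.log S.det - Fintype.card n := by
    rw [hlogM, htrM]; ring
  have hMS : M = 1 ↔ Sig = S := by
    constructor
    · intro h1
      have hRu : IsUnit R.det := isUnit_iff_ne_zero.mpr hdetRne
      have h2 : R⁻¹ * (R * Sig⁻¹ * R) * R⁻¹ = R⁻¹ * 1 * R⁻¹ := by rw [← hMdef, h1]
      rw [Matrix.mul_assoc, Matrix.mul_assoc, Matrix.mul_nonsing_inv _ hRu, Matrix.mul_one,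
        ← Matrix.mul_assoc, Matrix.nonsing_inv_mul _ hRu, Matrix.one_mul, Matrix.mul_one] at h2
      have h3 : Sig⁻¹ = (R * R)⁻¹ := by rw [Matrix.mul_inv_rev, h2]
      rw [hRR] at h3
      have := congrArg (·⁻¹) h3
      simpa [Matrix.nonsing_inv_nonsing_inv _ (isUnit_iff_ne_zero.mpr hSigdet.ne'),
        Matrix.nonsing_inv_nonsing_inv _ (isUnit_iff_ne_zero.mpr hSdet.ne')] using this
    · rintro rfl
      have hRu : IsUnit R.det := isUnit_iff_ne_zero.mpr hdetRne
      have hinv : Sig⁻¹ = R⁻¹ * R⁻¹ := by rw [← hRR, Matrix.mul_inv_rev]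
      rw [hMdef, hinv]
      simp only [Matrix.mul_assoc]
      rw [Matrix.nonsing_inv_mul _ hRu, Matrix.mul_one, Matrix.mul_nonsing_inv _ hRu]
  constructor
  · rw [hrw]; linarith
  · rw [hrw]
    constructor
    · intro h
      have : Real.log M.det = M.trace - Fintype.card n := by linarith
      exact hMS.mp (hiff.mp this)
    · intro h
      have : Real.log M.det = M.trace - Fintype.card n := hiff.mpr (hMS.mpr h)
      rw [this]; ring

lemma part2 {p : ℕ} {S : Matrix (Fin p) (Fin p) ℝ} (hS : S.PosSemidef) (hd : ¬ IsUnit S.det) :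
    ∀ y : ℝ, ∃ Sig : Matrix (Fin p) (Fin p) ℝ, Sig.PosDef ∧
      y < -Real.log Sig.det - (Sig⁻¹ * S).trace := by
  have hdet0 : S.det = 0 := by simpa [isUnit_iff_ne_zero, not_not] using hd
  obtain ⟨v, hv0, hSv⟩ := (Matrix.exists_mulVec_eq_zero_iff).mpr hdet0
  set c := v ⬝ᵥ v with hc
  have hcpos : 0 < c := by
    rcases lt_or_eq_of_le (Finset.sum_nonneg fun i _ => mul_self_nonneg (v i) :
        (0:ℝ) ≤ v ⬝ᵥ v) with h | h
    · exact h
    · exact absurd (dotProduct_self_eq_zero.mp h.symm) hv0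
  set w : Fin p → ℝ := (Real.sqrt c)⁻¹ • v with hw
  have hsc : Real.sqrt c ≠ 0 := (Real.sqrt_pos.mpr hcpos).ne'
  have hww : w ⬝ᵥ w = 1 := by
    rw [hw, smul_dotProduct, dotProduct_smul, smul_eq_mul, smul_eq_mul, ← hc,
      ← mul_assoc, ← mul_inv, Real.mul_self_sqrt hcpos.le]
    exact inv_mul_cancel₀ hcpos.ne'
  have hSw : S *ᵥ w = 0 := by rw [hw, mulVec_smul, hSv, smul_zero]
  set P : Matrix (Fin p) (Fin p) ℝ := vecMulVec w w with hP
  have hPP : P * P = P := by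
    ext i j
    simp only [hP, Matrix.mul_apply, vecMulVec_apply]
    have : ∑ k, (w i * w k) * (w k * w j) = (w i * w j) * ∑ k, w k * w k := by
      rw [Finset.mul_sum]; congr 1; funext k; ring
    rw [this]
    rw [show ∑ k, w k * w k = 1 from hww]
    ring
  have hPsym : Pᴴ = P := by
    ext i j
    simp [hP, vecMulVec_apply, mul_comm]
  have hPS : P * S = 0 := by
    have hwS : w ᵥ* S = 0 := by
      have := hS.1
      rw [show S = Sᴴ from this.symm, vecMul_conjTranspose]
      simp [hSw]
    ext i j
    simp only [hP, Matrix.mul_apply, vecMulVec_apply, Matrix.zero_apply]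
    have : ∑ k, (w i * w k) * S k j = w i * (w ᵥ* S) j := by
      rw [Matrix.vecMul, dotProduct, Finset.mul_sum]; congr 1; funext k; ring
    rw [this, hwS]; simp
  have h1P : (1 - P).PosSemidef := by
    have heq : (1 - P) = (1 - P)ᴴ * (1 - P) := by
      rw [conjTranspose_sub, conjTranspose_one, hPsym, sub_mul, mul_sub, mul_sub,
        Matrix.mul_one, Matrix.one_mul, Matrix.mul_one, hPP]
      abel
    rw [heq]
    exact posSemidef_conjTranspose_mul_self _
  intro y
  set t : ℝ := min (1/2) (Real.exp (-(y + S.trace + 1))) with ht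
  have ht0 : 0 < t := lt_min (by norm_num) (Real.exp_pos _)
  have ht1 : t ≤ 1 := le_trans (min_le_left _ _) (by norm_num)
  set Sig : Matrix (Fin p) (Fin p) ℝ := 1 - (1 - t) • P with hSigdef
  have hSigPD : Sig.PosDef := by
    have hdecomp : Sig = t • (1 : Matrix (Fin p) (Fin p) ℝ) + (1 - t) • (1 - P) := by
      rw [hSigdef, smul_sub]
      module
    rw [hdecomp]
    refine Matrix.PosDef.add_posSemidef ?_ ?_
    · refine Matrix.PosDef.of_dotProduct_mulVec_pos (by simp [Matrix.IsHermitian]) fun x hx => ?_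
      simp only [smul_mulVec, one_mulVec, dotProduct_smul, smul_eq_mul]
      exact mul_pos ht0 (Matrix.dotProduct_star_self_pos_iff.mpr hx)
    · refine Matrix.PosSemidef.of_dotProduct_mulVec_nonneg (by rw [Matrix.IsHermitian, conjTranspose_smul, h1P.1, star_trivial]) fun x => ?_
      simp only [smul_mulVec, dotProduct_smul, smul_eq_mul]
      exact mul_nonneg (by linarith) (h1P.dotProduct_mulVec_nonneg x)
  have hdetSig : Sig.det = t := by
    have : Sig = 1 + Matrix.replicateCol Unit (-(1 - t) • w) * Matrix.replicateRow Unit w := by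
      rw [hSigdef]
      ext i j
      simp [hP, Matrix.mul_apply, vecMulVec_apply, Matrix.replicateCol, Matrix.replicateRow, sub_eq_add_neg]
      ring
    rw [this, det_one_add_replicateCol_mul_replicateRow]
    rw [dotProduct_smul, hww]
    simp
  have hSigInv : Sig⁻¹ = 1 + (t⁻¹ - 1) • P := by
    refine Matrix.inv_eq_right_inv ?_
    rw [hSigdef, sub_mul, Matrix.one_mul, mul_add, Matrix.mul_one, smul_mul_assoc,
      mul_smul_comm, hPP, smul_smul]
    have : (1 - t) * (t⁻¹ - 1) = t⁻¹ - 1 - (1 - t) := by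
      field_simp
    rw [this]
    module
  have htrace : (Sig⁻¹ * S).trace = S.trace := by
    rw [hSigInv, add_mul, Matrix.one_mul, smul_mul_assoc, hPS, smul_zero, add_zero]
  refine ⟨Sig, hSigPD, ?_⟩
  rw [htrace, hdetSig]
  have hlt : Real.log t ≤ -(y + S.trace + 1) := by
    calc Real.log t ≤ Real.log (Real.exp (-(y + S.trace + 1))) :=
      Real.log_le_log ht0 (min_le_right _ _)
    _ = -(y + S.trace + 1) := Real.log_exp _
  linarith

/-- If `S` is positive definite, then `ℓ(Σ|S) ≤ -log det S - p` for every positive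
definite `Σ`, with equality if and only if `Σ = S`.  If instead `S` is positive
semidefinite and singular, then `ℓ(·|S)` is unbounded above on the positive definite
cone. -/
theorem loglik_max_at_sample_covariance (p : ℕ) (S : Matrix (Fin p) (Fin p) ℝ) :
    (S.PosDef → ∀ Sig : Matrix (Fin p) (Fin p) ℝ, Sig.PosDef →
      loglik Sig S ≤ -Real.log S.det - p ∧
      (loglik Sig S = -Real.log S.det - p ↔ Sig = S)) ∧
    (S.PosSemidef → ¬ IsUnit S.det →
      (⨆ Sig ∈ {A : Matrix (Fin p) (Fin p) ℝ | A.PosDef},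
        (loglik Sig S : EReal)) = ⊤) := by
  constructor
  · intro hS Sig hSig
    have h := part1 hS hSig
    rw [Fintype.card_fin] at h
    simpa [loglik] using h
  · intro hS hd
    refine (EReal.eq_top_iff_forall_lt _).mpr fun y => ?_
    obtain ⟨Sig, hPD, hlt⟩ := part2 hS hd y
    have h1 : (y : EReal) < (loglik Sig S : EReal) := by
      rw [EReal.coe_lt_coe_iff]
      simpa [loglik] using hlt
    exact h1.trans_le (le_iSup₂ (f := fun (A : Matrix (Fin p) (Fin p) ℝ)
      (_ : A ∈ {A : Matrix (Fin p) (Fin p) ℝ | A.PosDef}) => (loglik A S : EReal)) Sig hPD)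

end
end
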